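/- arXiv:cs/0601095 — 7 statements merged into one kernel-verified Lean document; each statement's English description precedes it below -/
import Mathlib

section
/- For nonzero codewords r, r' ∈ R and c, c' ∈ C over F_q, the rank-one product matrices (r_i c_j) and (r'_i c'_j) are equal if and only if there exists a nonzero λ ∈ F_q with r' = λ r and c' = λ^{-1} c. Consequently, the number of distinct nonzero rank-one codewords of the form (r_i c_j) with wt(r) = a and wt(c) = b equals E_R(a) * E_C(b) / (q-1), where E_R, E_C are weight enumerators, provided a, b ≥ 1. -/
/-!
If `c i * r j = c' i * r' j` for all `i, j` with `r, c ≠ 0`, comparing at a position where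
`c i₀ * r j₀ ≠ 0` shows `r' = λ • r` with `λ = c i₀ / c' i₀`, and then `c' = λ⁻¹ • c`.
So the fibres of `(r, c) ↦ (c i * r j)` over pairs of nonzero codewords are exactly the orbits
`{(λ • r, λ⁻¹ • c) | λ ∈ F_qˣ}`, which have `q - 1` elements each and stay inside the pairs of
weight `(a, b)` because scaling by a unit preserves membership in a code and Hamming weight.
Counting pairs fibre by fibre gives the formula.
-/

open Set

lemma Set.ncard_eq_ncard_image_mul {α β : Type*} {f : α → β} {s : Set α} (hs : s.Finite)
    {k : ℕ} (hk : ∀ x ∈ s, {y ∈ s | f y = f x}.ncard = k) : s.ncard = (f '' s).ncard * k := by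
  classical
  lift s to Finset α using hs
  rw [← Finset.coe_image, ncard_coe_finset, ncard_coe_finset, Finset.card_eq_sum_card_image f s,
    Finset.sum_const_nat]
  intro b hb
  obtain ⟨x, hx, rfl⟩ := Finset.mem_image.mp hb
  rw [← hk x hx, ← ncard_coe_finset, Finset.coe_filter]
  rfl

section Outer

variable {F ι κ : Type*} [Field F]

lemma outer_eq_outer_iff {r r' : κ → F} {c c' : ι → F} (hr : r ≠ 0) (hc : c ≠ 0) :
    ((fun i j => c i * r j) = fun i j => c' i * r' j) ↔
      ∃ l : F, l ≠ 0 ∧ r' = l • r ∧ c' = l⁻¹ • c := by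
  obtain ⟨j₀, hj₀⟩ : ∃ j, r j ≠ 0 := Function.ne_iff.mp hr
  obtain ⟨i₀, hi₀⟩ : ∃ i, c i ≠ 0 := Function.ne_iff.mp hc
  constructor
  · intro h
    have hcr (i j) : c i * r j = c' i * r' j := congrFun (congrFun h i) j
    have hc'i₀ : c' i₀ ≠ 0 := left_ne_zero_of_mul (hcr i₀ j₀ ▸ mul_ne_zero hi₀ hj₀)
    have hl : c i₀ / c' i₀ ≠ 0 := div_ne_zero hi₀ hc'i₀
    have hr' : r' = (c i₀ / c' i₀) • r := funext fun j => by
      simp only [Pi.smul_apply, smul_eq_mul]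
      field_simp
      linear_combination -hcr i₀ j
    refine ⟨_, hl, hr', funext fun i => mul_right_cancel₀ hj₀ ?_⟩
    have hi : c i * r j₀ = c' i * (c i₀ / c' i₀ * r j₀) := by rw [hcr, hr']; rfl
    simp only [Pi.smul_apply, smul_eq_mul]
    calc c' i * r j₀ = (c i₀ / c' i₀)⁻¹ * (c' i * (c i₀ / c' i₀ * r j₀)) := by field_simp
      _ = (c i₀ / c' i₀)⁻¹ * c i * r j₀ := by rw [← hi, mul_assoc]
  · rintro ⟨l, hl, rfl, rfl⟩
    funext i j
    simp only [Pi.smul_apply, smul_eq_mul]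
    field_simp

lemma outer_fiber_eq_range {r₀ : κ → F} {c₀ : ι → F} (hr₀ : r₀ ≠ 0) (hc₀ : c₀ ≠ 0) :
    {p : (κ → F) × (ι → F) | (fun i j => p.2 i * p.1 j) = fun i j => c₀ i * r₀ j} =
      range fun l : Fˣ => (l • r₀, l⁻¹ • c₀) := by
  ext ⟨r, c⟩
  simp only [mem_ofPred_eq, mem_range, Prod.mk.injEq, eq_comm (a := fun i j => c i * r j),
    outer_eq_outer_iff hr₀ hc₀, Units.smul_def, Units.val_inv_eq_inv_val]
  constructor
  · rintro ⟨l, hl, rfl, rfl⟩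
    exact ⟨Units.mk0 l hl, rfl, rfl⟩
  · rintro ⟨l, rfl, rfl⟩
    exact ⟨l, l.ne_zero, rfl, rfl⟩

lemma ncard_image_outer_mul [Finite F] [Finite ι] [Finite κ] {A : Set (κ → F)} {B : Set (ι → F)}
    (hA₀ : 0 ∉ A) (hB₀ : 0 ∉ B) (hA : ∀ l : Fˣ, ∀ r ∈ A, l • r ∈ A)
    (hB : ∀ l : Fˣ, ∀ c ∈ B, l • c ∈ B) :
    ((fun p : (κ → F) × (ι → F) => fun i j => p.2 i * p.1 j) '' A ×ˢ B).ncard * (Nat.card F - 1)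
      = A.ncard * B.ncard := by
  rw [← ncard_prod]
  refine (ncard_eq_ncard_image_mul (toFinite _) ?_).symm
  rintro ⟨r₀, c₀⟩ ⟨hr₀A, hc₀B⟩
  have hr₀ : r₀ ≠ 0 := ne_of_mem_of_not_mem hr₀A hA₀
  have hc₀ : c₀ ≠ 0 := ne_of_mem_of_not_mem hc₀B hB₀
  have hinj : Function.Injective fun l : Fˣ => (l • r₀, l⁻¹ • c₀) := fun l l' h =>
    Units.ext <| smul_left_injective F hr₀ (congrArg Prod.fst h)
  have hsub : range (fun l : Fˣ => (l • r₀, l⁻¹ • c₀)) ⊆ A ×ˢ B := by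
    rintro _ ⟨l, rfl⟩
    exact ⟨hA l r₀ hr₀A, hB l⁻¹ c₀ hc₀B⟩
  rw [← Nat.card_units, ← ncard_range_of_injective hinj, ← sep_eq_of_subset hsub,
    ← outer_fiber_eq_range hr₀ hc₀]
  rfl

end Outer

lemma hammingNorm_units_smul {R M ι : Type*} [Fintype ι] [Semiring R] [AddCommMonoid M]
    [Module R M] [DecidableEq M] (l : Rˣ) (x : ι → M) : hammingNorm (l • x) = hammingNorm x := by
  rw [Units.smul_def]
  exact hammingNorm_smul (fun _ => l.isSMulRegular _) x

lemma Submodule.units_smul_mem_setOf_hammingNorm_eq {R M ι : Type*} [Fintype ι] [Semiring R]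
    [AddCommMonoid M] [Module R M] [DecidableEq M] (S : Submodule R (ι → M)) {a : ℕ} (l : Rˣ)
    {x : ι → M} (hx : x ∈ {r | r ∈ (S : Set (ι → M)) ∧ hammingNorm r = a}) :
    l • x ∈ {r | r ∈ (S : Set (ι → M)) ∧ hammingNorm r = a} :=
  ⟨S.smul_of_tower_mem l hx.1, (hammingNorm_units_smul l x).trans hx.2⟩

lemma zero_notMem_setOf_hammingNorm_eq {M ι : Type*} [Fintype ι] [Zero M] [DecidableEq M]
    (S : Set (ι → M)) {a : ℕ} (ha : 1 ≤ a) :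
    (0 : ι → M) ∉ {r | r ∈ S ∧ hammingNorm r = a} := by
  rintro ⟨-, h⟩
  rw [hammingNorm_zero] at h
  omega

/-- Two nonzero rank-one product matrices `(r_i c_j)` and `(r'_i c'_j)` are equal iff
`r' = λ r` and `c' = λ⁻¹ c` for some nonzero `λ ∈ F_q`; consequently, the number of
distinct nonzero rank-one codewords built from row codewords of weight `a` and column
codewords of weight `b` equals `E_R(a) E_C(b) / (q-1)` (stated multiplicatively). -/
theorem stmt5 (F : Type*) [Field F] [Fintype F] [DecidableEq F] (q nr nc : ℕ)
    (hq : Fintype.card F = q)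
    (R : Submodule F (Fin nr → F)) (C : Submodule F (Fin nc → F)) :
    (∀ r r' : Fin nr → F, ∀ c c' : Fin nc → F,
      r ∈ R → r' ∈ R → c ∈ C → c' ∈ C → r ≠ 0 → r' ≠ 0 → c ≠ 0 → c' ≠ 0 →
      (((fun (i : Fin nc) (j : Fin nr) => c i * r j) = fun i j => c' i * r' j) ↔
        ∃ l : F, l ≠ 0 ∧ r' = l • r ∧ c' = l⁻¹ • c)) ∧
    (∀ a b : ℕ, 1 ≤ a → 1 ≤ b →
      Set.ncard {M : Fin nc → Fin nr → F |
          ∃ r ∈ R, ∃ c ∈ C, hammingNorm r = a ∧ hammingNorm c = b ∧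
            M = fun i j => c i * r j} * (q - 1)
        = Set.ncard {r | r ∈ (R : Set (Fin nr → F)) ∧ hammingNorm r = a} *
          Set.ncard {c | c ∈ (C : Set (Fin nc → F)) ∧ hammingNorm c = b}) := by
  refine ⟨fun r r' c c' _ _ _ _ hr _ hc _ => outer_eq_outer_iff hr hc, fun a b ha hb => ?_⟩
  have hM : {M : Fin nc → Fin nr → F | ∃ r ∈ R, ∃ c ∈ C, hammingNorm r = a ∧
      hammingNorm c = b ∧ M = fun i j => c i * r j} =
      (fun p : (Fin nr → F) × (Fin nc → F) => fun i j => p.2 i * p.1 j) ''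
        {r | r ∈ (R : Set (Fin nr → F)) ∧ hammingNorm r = a} ×ˢ
        {c | c ∈ (C : Set (Fin nc → F)) ∧ hammingNorm c = b} := by
    ext M
    simp only [mem_ofPred_eq, mem_image, mem_prod, Prod.exists, SetLike.mem_coe]
    grind
  rw [hM, ← hq, ← Nat.card_eq_fintype_card]
  exact ncard_image_outer_mul (zero_notMem_setOf_hammingNorm_eq _ ha)
    (zero_notMem_setOf_hammingNorm_eq _ hb) (fun l _ => R.units_smul_mem_setOf_hammingNorm_eq l)
    (fun l _ => C.units_smul_mem_setOf_hammingNorm_eq l)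
end

section
/- The multiplicity of the minimum distance of the product code P = R × C equals E_R(d_r) * E_C(d_c) / (q-1), i.e., the number of codewords of P of weight d_r d_c is the product of the minimum-weight multiplicities of the component codes divided by q-1. -/
/-!
Every codeword of `P` of weight `d_r d_c` lies below Tolhuizen's bound, so it is an outer product
`c ⊗ r`; since `wt (c ⊗ r) = wt c * wt r` with `wt r ≥ d_r` and `wt c ≥ d_c`, both factors have
minimum weight. Hence `(r, c) ↦ c ⊗ r` maps the pairs of minimum-weight words onto the codewords of
weight `d_r d_c`, and its fibres are the orbits `(u • r, u⁻¹ • c)` of `Fˣ`, of size `q - 1`.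
-/

open Finset Matrix

section MinWeight

variable {F ι : Type*} [Fintype ι] [Zero F] [DecidableEq F]

noncomputable def minWeight (s : Set (ι → F)) : ℕ :=
  sInf {d | ∃ x ∈ s, x ≠ 0 ∧ hammingNorm x = d}

theorem minWeight_le {s : Set (ι → F)} {x : ι → F} (hx : x ∈ s) (hx₀ : x ≠ 0) :
    minWeight s ≤ hammingNorm x :=
  Nat.sInf_le ⟨x, hx, hx₀, rfl⟩

theorem minWeight_pos {s : Set (ι → F)} (hs : ∃ x ∈ s, x ≠ 0) : 0 < minWeight s := by
  obtain ⟨x, -, hx₀, hxd⟩ : minWeight s ∈ {d | ∃ x ∈ s, x ≠ 0 ∧ hammingNorm x = d} :=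
    Nat.sInf_mem (hs.elim fun x hx => ⟨_, x, hx.1, hx.2, rfl⟩)
  exact hxd ▸ hammingNorm_pos_iff.2 hx₀

end MinWeight

section OuterProduct

variable {F ι κ : Type*}

theorem hammingNorm_uncurry_vecMulVec [Fintype ι] [Fintype κ] [MulZeroClass F] [NoZeroDivisors F]
    [DecidableEq F] (c : ι → F) (r : κ → F) :
    hammingNorm (Function.uncurry (vecMulVec c r)) = hammingNorm c * hammingNorm r := by
  unfold hammingNorm
  rw [← card_product]
  congr 1
  ext ⟨i, j⟩
  simp only [mem_filter, mem_product, mem_univ, true_and]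
  exact mul_ne_zero_iff

theorem hammingNorm_eq_minWeight_of_vecMulVec [Fintype ι] [Fintype κ] [MulZeroClass F]
    [NoZeroDivisors F] [DecidableEq F]
    {R : Set (κ → F)} {C : Set (ι → F)} (hR : ∃ r ∈ R, r ≠ 0) (hC : ∃ c ∈ C, c ≠ 0)
    {r : κ → F} {c : ι → F} (hr : r ∈ R) (hc : c ∈ C)
    (h : hammingNorm (Function.uncurry (vecMulVec c r)) = minWeight C * minWeight R) :
    hammingNorm c = minWeight C ∧ hammingNorm r = minWeight R := by
  rw [hammingNorm_uncurry_vecMulVec] at h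
  have hpos : 0 < hammingNorm c * hammingNorm r :=
    h ▸ mul_pos (minWeight_pos hC) (minWeight_pos hR)
  have hc₀ : c ≠ 0 := hammingNorm_pos_iff.1 (pos_of_mul_pos_left hpos (Nat.zero_le _))
  have hr₀ : r ≠ 0 := hammingNorm_pos_iff.1 (pos_of_mul_pos_right hpos (Nat.zero_le _))
  exact ((mul_eq_mul_iff_eq_and_eq_of_pos (minWeight_le hc hc₀) (minWeight_le hr hr₀)
    (minWeight_pos hC) (hammingNorm_pos_iff.2 hr₀)).1 h.symm).imp Eq.symm Eq.symm

variable [Field F]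

theorem hammingNorm_units_smul_s6 [Fintype ι] [DecidableEq F] (u : Fˣ) (x : ι → F) :
    hammingNorm (u • x) = hammingNorm x := by
  rw [Units.smul_def]
  exact hammingNorm_smul (fun _ => u.isSMulRegular F) x

theorem vecMulVec_eq_vecMulVec_iff {c c₀ : ι → F} {r r₀ : κ → F} (hc₀ : c₀ ≠ 0) (hr₀ : r₀ ≠ 0) :
    vecMulVec c r = vecMulVec c₀ r₀ ↔ ∃ u : Fˣ, r = u • r₀ ∧ c = u⁻¹ • c₀ := by
  refine ⟨fun h => ?_, ?_⟩
  · obtain ⟨i₀, hi₀⟩ := Function.ne_iff.1 hc₀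
    obtain ⟨j₀, hj₀⟩ := Function.ne_iff.1 hr₀
    have hij := congrFun₂ h i₀ j₀
    simp only [vecMulVec_apply] at hij
    have hci₀ : c i₀ ≠ 0 := by
      rintro hci; exact mul_ne_zero hi₀ hj₀ (by rw [← hij, hci, zero_mul])
    have hrj₀ : r j₀ ≠ 0 := by
      rintro hrj; exact mul_ne_zero hi₀ hj₀ (by rw [← hij, hrj, mul_zero])
    refine ⟨Units.mk0 (c₀ i₀ / c i₀) (div_ne_zero hi₀ hci₀), ?_, ?_⟩
    · ext j
      have hi₀j := congrFun₂ h i₀ j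
      simp only [vecMulVec_apply] at hi₀j
      simp only [Units.smul_def, Units.val_mk0, Pi.smul_apply, smul_eq_mul]
      field_simp
      linear_combination hi₀j
    · ext i
      have hij₀ := congrFun₂ h i j₀
      simp only [vecMulVec_apply] at hij₀
      simp only [Units.smul_def, Units.val_inv_eq_inv_val, Units.val_mk0, Pi.smul_apply,
        smul_eq_mul]
      field_simp
      rw [eq_div_iff hi₀]
      apply mul_right_cancel₀ hrj₀
      linear_combination c₀ i₀ * hij₀ - c₀ i * hij
  · rintro ⟨u, rfl, rfl⟩
    rw [smul_vecMulVec, vecMulVec_smul, smul_smul, inv_mul_cancel, one_smul]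

theorem card_filter_vecMulVec_eq [Fintype F] [DecidableEq F] [DecidableEq (Matrix ι κ F)]
    {A : Finset (κ → F)} {B : Finset (ι → F)}
    (hA : ∀ u : Fˣ, ∀ r ∈ A, u • r ∈ A) (hB : ∀ u : Fˣ, ∀ c ∈ B, u • c ∈ B)
    {r₀ : κ → F} {c₀ : ι → F} (hr₀A : r₀ ∈ A) (hc₀B : c₀ ∈ B) (hr₀ : r₀ ≠ 0) (hc₀ : c₀ ≠ 0) :
    #{p ∈ A ×ˢ B | vecMulVec p.2 p.1 = vecMulVec c₀ r₀} = Fintype.card F - 1 := by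
  rw [← Fintype.card_units, ← card_univ]
  symm
  refine card_bij (fun u _ => (u • r₀, u⁻¹ • c₀)) (fun u _ => ?_)
    (fun u _ v _ huv => Units.ext (smul_left_injective F hr₀ (congrArg Prod.fst huv)))
    (fun p hp => ?_)
  · simp only [mem_filter, mem_product]
    exact ⟨⟨hA u r₀ hr₀A, hB _ c₀ hc₀B⟩, (vecMulVec_eq_vecMulVec_iff hc₀ hr₀).2 ⟨u, rfl, rfl⟩⟩
  · obtain ⟨u, hr, hc⟩ := (vecMulVec_eq_vecMulVec_iff hc₀ hr₀).1 (mem_filter.1 hp).2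
    exact ⟨u, mem_univ u, Prod.ext hr.symm hc.symm⟩

def productCode (C : Submodule F (ι → F)) (R : Submodule F (κ → F)) : Set (Matrix ι κ F) :=
  {M | (∀ i, M i ∈ R) ∧ ∀ j, (fun i => M i j) ∈ C}

theorem vecMulVec_mem_productCode {C : Submodule F (ι → F)} {R : Submodule F (κ → F)}
    {c : ι → F} {r : κ → F} (hc : c ∈ C) (hr : r ∈ R) : vecMulVec c r ∈ productCode C R := by
  refine ⟨fun i => R.smul_mem (c i) hr, fun j => ?_⟩
  simp_rw [vecMulVec_apply, mul_comm _ (r j)]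
  exact C.smul_mem (r j) hc

theorem ncard_mul_ncard_eq_of_vecMulVec [Fintype ι] [Fintype κ] [Fintype F] [DecidableEq F]
    {R : Submodule F (κ → F)} {C : Submodule F (ι → F)} {dr dc : ℕ} (hdr : 0 < dr) (hdc : 0 < dc)
    {S : Set (Matrix ι κ F)}
    (hS : ∀ M, M ∈ S ↔ ∃ r ∈ R, ∃ c ∈ C, hammingNorm r = dr ∧ hammingNorm c = dc ∧
      vecMulVec c r = M) :
    {r | r ∈ (R : Set (κ → F)) ∧ hammingNorm r = dr}.ncard *
        {c | c ∈ (C : Set (ι → F)) ∧ hammingNorm c = dc}.ncard =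
      S.ncard * (Fintype.card F - 1) := by
  classical
  simp only [Set.ncard_eq_toFinset_card', Set.toFinset_ofPred, SetLike.mem_coe]
  set A : Finset (κ → F) := {r | r ∈ R ∧ hammingNorm r = dr}
  set B : Finset (ι → F) := {c | c ∈ C ∧ hammingNorm c = dc}
  have hA : ∀ u : Fˣ, ∀ r ∈ A, u • r ∈ A := by
    simp only [A, mem_filter, mem_univ, true_and, hammingNorm_units_smul_s6]
    exact fun u r hr => ⟨R.smul_of_tower_mem u hr.1, hr.2⟩
  have hB : ∀ u : Fˣ, ∀ c ∈ B, u • c ∈ B := by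
    simp only [B, mem_filter, mem_univ, true_and, hammingNorm_units_smul_s6]
    exact fun u c hc => ⟨C.smul_of_tower_mem u hc.1, hc.2⟩
  have hmaps : Set.MapsTo (fun p : (κ → F) × (ι → F) => vecMulVec p.2 p.1) ↑(A ×ˢ B)
      ↑S.toFinset := by
    rintro ⟨r, c⟩ hp
    simp only [coe_product, Set.mem_prod, mem_coe, A, B, mem_filter, mem_univ, true_and] at hp
    exact Set.mem_toFinset.2 ((hS _).2 ⟨r, hp.1.1, c, hp.2.1, hp.1.2, hp.2.2, rfl⟩)
  rw [← card_product, card_eq_sum_card_fiberwise hmaps]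
  refine sum_const_nat fun M hM => ?_
  obtain ⟨r, hr, c, hc, hrw, hcw, rfl⟩ := (hS M).1 (Set.mem_toFinset.1 hM)
  exact card_filter_vecMulVec_eq hA hB (mem_filter.2 ⟨mem_univ _, hr, hrw⟩)
    (mem_filter.2 ⟨mem_univ _, hc, hcw⟩) (hammingNorm_pos_iff.1 (hrw ▸ hdr))
    (hammingNorm_pos_iff.1 (hcw ▸ hdc))

end OuterProduct

/-- The minimum-distance multiplicity of the product code `P = R × C` equals
`E_R(d_r) E_C(d_c) / (q-1)` (stated multiplicatively), assuming Tolhuizen's theorem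
that all codewords of weight below `w(d_r,d_c)` are rank-one. -/
theorem stmt6 (F : Type*) [Field F] [Fintype F] [DecidableEq F] (q nr nc dr dc : ℕ)
    (hq : Fintype.card F = q)
    (R : Submodule F (Fin nr → F)) (C : Submodule F (Fin nc → F))
    (hdr : dr = sInf {d | ∃ r ∈ R, r ≠ 0 ∧ hammingNorm r = d})
    (hdc : dc = sInf {d | ∃ c ∈ C, c ≠ 0 ∧ hammingNorm c = d})
    (hRne : ∃ r ∈ R, r ≠ 0) (hCne : ∃ c ∈ C, c ≠ 0)
    (P : Set (Fin nc → Fin nr → F))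
    (hP : P = {M | (∀ i, M i ∈ R) ∧ (∀ j, (fun i => M i j) ∈ C)})
    (wtM : (Fin nc → Fin nr → F) → ℕ)
    (hwt : ∀ M, wtM M = (Finset.univ.filter fun p : Fin nc × Fin nr => M p.1 p.2 ≠ 0).card)
    (hrank : ∀ M ∈ P,
      wtM M < dr * dc + max (dr * ((dc + q - 1) / q)) (dc * ((dr + q - 1) / q)) →
      ∃ r ∈ R, ∃ c ∈ C, M = fun i j => c i * r j) :
    Set.ncard {M ∈ P | wtM M = dr * dc} * (q - 1)
      = Set.ncard {r | r ∈ (R : Set (Fin nr → F)) ∧ hammingNorm r = dr} *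
        Set.ncard {c | c ∈ (C : Set (Fin nc → F)) ∧ hammingNorm c = dc} := by
  replace hdr : dr = minWeight (R : Set (Fin nr → F)) := hdr
  replace hdc : dc = minWeight (C : Set (Fin nc → F)) := hdc
  replace hP : P = productCode C R := hP
  subst hdr hdc hP hq
  symm
  refine ncard_mul_ncard_eq_of_vecMulVec (minWeight_pos hRne) (minWeight_pos hCne)
    fun M => ⟨fun ⟨hMP, hMw⟩ => ?_, ?_⟩
  · obtain ⟨r, hr, c, hc, rfl⟩ := hrank M hMP (by
      rw [hMw]
      exact lt_add_of_pos_right _ (lt_max_of_lt_left (mul_pos (minWeight_pos hRne)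
        (Nat.div_pos (by have := minWeight_pos hCne; omega) Fintype.card_pos))))
    obtain ⟨hcw, hrw⟩ := hammingNorm_eq_minWeight_of_vecMulVec hRne hCne hr hc
      (((hwt _).symm.trans hMw).trans (mul_comm _ _))
    exact ⟨r, hr, c, hc, hrw, hcw, rfl⟩
  · rintro ⟨r, hr, c, hc, hrw, hcw, rfl⟩
    exact ⟨vecMulVec_mem_productCode hc hr,
      (hwt _).trans ((hammingNorm_uncurry_vecMulVec c r).trans (by rw [hcw, hrw, mul_comm]))⟩
end

section
/- Let P = C × C be the square product of an (n, k, d) Reed-Solomon code C over F_q (so d = n - k + 1 and n < q). Then P has exactly one codeword of weight 0, exactly (q-1) * (binomial(n,d))^2 codewords of weight d^2, and no codewords of weight h with d^2 < h < d(d+1). -/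
/-- For the square product `P = C × C` of an `(n,k,d)` Reed-Solomon (MDS) code over
`F_q` (`d = n-k+1`, `n < q`): `P` has exactly one codeword of weight `0`, exactly
`(q-1) * (C(n,d))^2` codewords of weight `d^2`, and no codewords of weight `h` with
`d^2 < h < d(d+1)`. -/
theorem stmt7 (F : Type*) [Field F] [Fintype F] [DecidableEq F] (q n k d : ℕ)
    (hq : Fintype.card F = q) (hn : n < q)
    (C : Submodule F (Fin n → F))
    (hk : Module.finrank F C = k) (hkpos : 0 < k)
    (hd : d = n - k + 1)
    (hdist : sInf {w | ∃ c ∈ C, c ≠ 0 ∧ hammingNorm c = w} = d)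
    (hE : Set.ncard {c | c ∈ (C : Set (Fin n → F)) ∧ hammingNorm c = d}
      = (q - 1) * n.choose d)
    (P : Set (Fin n → Fin n → F))
    (hP : P = {M | (∀ i, M i ∈ C) ∧ (∀ j, (fun i => M i j) ∈ C)})
    (wtM : (Fin n → Fin n → F) → ℕ)
    (hwt : ∀ M, wtM M = (Finset.univ.filter fun p : Fin n × Fin n => M p.1 p.2 ≠ 0).card)
    (hrank : ∀ M ∈ P, wtM M < d * (d + 1) →
      ∃ r ∈ C, ∃ c ∈ C, M = fun i j => c i * r j) :
    Set.ncard {M ∈ P | wtM M = 0} = 1 ∧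
    Set.ncard {M ∈ P | wtM M = d ^ 2} = (q - 1) * (n.choose d) ^ 2 ∧
    ∀ h : ℕ, d ^ 2 < h → h < d * (d + 1) → Set.ncard {M ∈ P | wtM M = h} = 0 := by
  classical
  subst hP
  have hd0 : 0 < d := by omega
  have hq2 : 2 ≤ q := by rw [← hq]; exact Fintype.one_lt_card
  have hmin : ∀ c, c ∈ C → c ≠ 0 → d ≤ hammingNorm c := by
    intro c hc hc0
    rw [← hdist]
    exact Nat.sInf_le ⟨c, hc, hc0, rfl⟩
  have wt_outer : ∀ c r : Fin n → F,
      wtM (fun i j => c i * r j) = hammingNorm c * hammingNorm r := by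
    intro c r
    rw [hwt]
    have hfe : (Finset.univ.filter fun p : Fin n × Fin n => c p.1 * r p.2 ≠ 0)
        = (Finset.univ.filter fun i => c i ≠ 0) ×ˢ (Finset.univ.filter fun j => r j ≠ 0) := by
      ext p
      simp [Finset.mem_product, mul_ne_zero_iff]
    rw [hfe, Finset.card_product]
    rfl
  have outer_memP : ∀ c r : Fin n → F, c ∈ C → r ∈ C →
      (fun i j => c i * r j) ∈
        {M : Fin n → Fin n → F | (∀ i, M i ∈ C) ∧ ∀ j, (fun i => M i j) ∈ C} := by
    intro c r hc hr
    constructor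
    · intro i
      have he : (fun j => c i * r j) = c i • r := by
        funext j; simp [smul_eq_mul]
      simpa [he] using C.smul_mem (c i) hr
    · intro j
      have he : (fun i => c i * r j) = r j • c := by
        funext i; simp [smul_eq_mul, mul_comm]
      simpa [he] using C.smul_mem (r j) hc
  have decomp : ∀ M : Fin n → Fin n → F, (∀ i, M i ∈ C) → (∀ j, (fun i => M i j) ∈ C) →
      d ^ 2 ≤ wtM M → wtM M < d * (d + 1) →
      ∃ c, (c ∈ C ∧ hammingNorm c = d) ∧ ∃ r, (r ∈ C ∧ hammingNorm r = d) ∧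
        M = fun i j => c i * r j := by
    intro M h1 h2 hge hlt
    obtain ⟨r, hr, c, hc, hM⟩ := hrank M ⟨h1, h2⟩ hlt
    have hw : wtM M = hammingNorm c * hammingNorm r := by rw [hM]; exact wt_outer c r
    have hd2 : 0 < d ^ 2 := by positivity
    have hc0 : c ≠ 0 := by
      rintro rfl
      simp only [hammingNorm_zero, zero_mul] at hw
      omega
    have hr0 : r ≠ 0 := by
      rintro rfl
      simp only [hammingNorm_zero, mul_zero] at hw
      omega
    have hcd := hmin c hc hc0
    have hrd := hmin r hr hr0
    have hcde : hammingNorm c = d := by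
      by_contra hne
      have h1' : d + 1 ≤ hammingNorm c := by omega
      have : d * (d + 1) ≤ hammingNorm c * hammingNorm r := by
        calc d * (d + 1) = (d + 1) * d := by ring
        _ ≤ hammingNorm c * hammingNorm r := Nat.mul_le_mul h1' hrd
      omega
    have hrde : hammingNorm r = d := by
      by_contra hne
      have h1' : d + 1 ≤ hammingNorm r := by omega
      have : d * (d + 1) ≤ hammingNorm c * hammingNorm r := Nat.mul_le_mul hcd h1'
      omega
    exact ⟨c, ⟨hc, hcde⟩, r, ⟨hr, hrde⟩, hM⟩
  refine ⟨?_, ?_, ?_⟩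
  · -- weight 0
    have hset : {M ∈ {M : Fin n → Fin n → F | (∀ i, M i ∈ C) ∧ ∀ j, (fun i => M i j) ∈ C} |
        wtM M = 0} = {0} := by
      ext M
      simp only [Set.mem_setOf_eq, Set.mem_singleton_iff]
      constructor
      · rintro ⟨-, hw0⟩
        rw [hwt] at hw0
        have hemp := Finset.card_eq_zero.mp hw0
        funext i j
        have := Finset.filter_eq_empty_iff.mp hemp (Finset.mem_univ (i, j))
        simpa using not_not.mp this
      · rintro rfl
        refine ⟨⟨fun i => C.zero_mem, fun j => C.zero_mem⟩, ?_⟩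
        rw [hwt]
        simp
    rw [hset, Set.ncard_singleton]
  · -- weight d^2
    set A : Set (Fin n → F) := {c | c ∈ (C : Set (Fin n → F)) ∧ hammingNorm c = d} with hA
    set S : Set (Fin n → Fin n → F) :=
      {M ∈ {M : Fin n → Fin n → F | (∀ i, M i ∈ C) ∧ ∀ j, (fun i => M i j) ∈ C} |
        wtM M = d ^ 2} with hS
    have hAfin : A.Finite := Set.toFinite _
    have hSfin : S.Finite := Set.toFinite _
    have hcardA : hAfin.toFinset.card = (q - 1) * n.choose d := by
      rw [← Set.ncard_eq_toFinset_card _ hAfin]; exact hE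
    have hd2lt : d ^ 2 < d * (d + 1) := by nlinarith
    -- fiber cardinality
    have fibercard : ∀ M ∈ hSfin.toFinset,
        ((hAfin.toFinset ×ˢ hAfin.toFinset).filter
          (fun p : (Fin n → F) × (Fin n → F) => (fun i j => p.1 i * p.2 j) = M)).card = q - 1 := by
      intro M hM
      rw [Set.Finite.mem_toFinset] at hM
      obtain ⟨hMP, hMw⟩ := hM
      obtain ⟨c₀, ⟨hc₀C, hc₀d⟩, r₀, ⟨hr₀C, hr₀d⟩, hM0⟩ :=
        decomp M hMP.1 hMP.2 (le_of_eq hMw.symm) (by omega)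
      have hc₀0 : c₀ ≠ 0 := by
        intro h; rw [h] at hc₀d; simp at hc₀d; omega
      have hr₀0 : r₀ ≠ 0 := by
        intro h; rw [h] at hr₀d; simp at hr₀d; omega
      obtain ⟨i₀, hi₀⟩ : ∃ i, c₀ i ≠ 0 := by
        by_contra hco
        push_neg at hco
        exact hc₀0 (funext fun i => hco i)
      obtain ⟨j₀, hj₀⟩ : ∃ j, r₀ j ≠ 0 := by
        by_contra hco
        push_neg at hco
        exact hr₀0 (funext fun j => hco j)
      have hnormsmul : ∀ (x : F), x ≠ 0 → ∀ v : Fin n → F,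
          hammingNorm (x • v) = hammingNorm v := by
        intro x hx v
        refine hammingNorm_smul (fun _ => ?_) v
        intro a b hab
        simpa using mul_left_cancel₀ hx (by simpa [smul_eq_mul] using hab)
      have hcount : (Finset.univ.filter fun y : F => y ≠ 0).card = q - 1 := by
        have hee : (Finset.univ.filter fun y : F => y ≠ 0) = Finset.univ.erase 0 :=
          Finset.filter_ne' Finset.univ 0
        rw [hee, Finset.card_erase_of_mem (Finset.mem_univ 0), Finset.card_univ, hq]
      rw [← hcount]
      symm
      apply Finset.card_bij (i := fun (x : F) (_ : x ∈ Finset.univ.filter fun y : F => y ≠ 0) =>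
        ((x • c₀, x⁻¹ • r₀) : (Fin n → F) × (Fin n → F)))
      · -- maps into the fiber
        intro x hx
        rw [Finset.mem_filter] at hx
        have hx0 : x ≠ 0 := hx.2
        rw [Finset.mem_filter, Finset.mem_product]
        refine ⟨⟨?_, ?_⟩, ?_⟩
        · rw [Set.Finite.mem_toFinset]
          exact ⟨C.smul_mem x hc₀C, by rw [hnormsmul x hx0]; exact hc₀d⟩
        · rw [Set.Finite.mem_toFinset]
          exact ⟨C.smul_mem x⁻¹ hr₀C, by rw [hnormsmul x⁻¹ (inv_ne_zero hx0)]; exact hr₀d⟩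
        · rw [hM0]
          funext i j
          simp only [Pi.smul_apply, smul_eq_mul]
          field_simp
      · -- injective
        intro x hx y hy hxy
        rw [Finset.mem_filter] at hx hy
        have h1 : x • c₀ = y • c₀ := congrArg Prod.fst hxy
        have h2 := congrFun h1 i₀
        simp only [Pi.smul_apply, smul_eq_mul] at h2
        exact mul_right_cancel₀ hi₀ h2
      · -- surjective
        rintro ⟨c, r⟩ hb
        rw [Finset.mem_filter, Finset.mem_product] at hb
        obtain ⟨⟨hcA, hrA⟩, hout⟩ := hb
        rw [Set.Finite.mem_toFinset] at hcA hrA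
        have heq : ∀ i j, c i * r j = c₀ i * r₀ j := by
          intro i j
          have := congrFun (congrFun (hout.trans hM0) i) j
          exact this
        have hci₀ : c i₀ ≠ 0 := by
          intro h
          have h2 := heq i₀ j₀
          rw [h, zero_mul] at h2
          exact (mul_ne_zero hi₀ hj₀) h2.symm
        set x : F := c i₀ * (c₀ i₀)⁻¹ with hxdef
        have hx0 : x ≠ 0 := mul_ne_zero hci₀ (inv_ne_zero hi₀)
        have hr' : ∀ j, r j = x⁻¹ * r₀ j := by
          intro j
          have h2 := heq i₀ j
          apply mul_left_cancel₀ hci₀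
          rw [h2, hxdef, mul_inv_rev, inv_inv]
          field_simp
        have hrj₀ : r j₀ ≠ 0 := by
          rw [hr' j₀]
          exact mul_ne_zero (inv_ne_zero hx0) hj₀
        have hc' : ∀ i, c i = x * c₀ i := by
          intro i
          apply mul_right_cancel₀ hrj₀
          rw [heq i j₀, hr' j₀, hxdef, mul_inv_rev, inv_inv]
          field_simp
        refine ⟨x, by rw [Finset.mem_filter]; exact ⟨Finset.mem_univ _, hx0⟩, ?_⟩
        apply Prod.ext
        · funext i
          simp only [Pi.smul_apply, smul_eq_mul]
          exact (hc' i).symm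
        · funext j
          simp only [Pi.smul_apply, smul_eq_mul]
          exact (hr' j).symm
    -- main count
    have key : (hAfin.toFinset ×ˢ hAfin.toFinset).card = hSfin.toFinset.card * (q - 1) := by
      rw [Finset.card_eq_sum_card_fiberwise
        (f := fun p : (Fin n → F) × (Fin n → F) => (fun i j => p.1 i * p.2 j))
        (t := hSfin.toFinset) ?_]
      · rw [Finset.sum_congr rfl fibercard, Finset.sum_const, smul_eq_mul]
      · intro p hp
        rw [Finset.mem_coe, Finset.mem_product, Set.Finite.mem_toFinset, Set.Finite.mem_toFinset] at hp
        rw [Finset.mem_coe, Set.Finite.mem_toFinset]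
        exact ⟨outer_memP p.1 p.2 hp.1.1 hp.2.1, by rw [wt_outer, hp.1.2, hp.2.2, sq]⟩
    have hprod : (hAfin.toFinset ×ˢ hAfin.toFinset).card
        = ((q - 1) * ((q - 1) * n.choose d ^ 2)) := by
      rw [Finset.card_product, hcardA]
      ring
    have hfin : hSfin.toFinset.card = (q - 1) * n.choose d ^ 2 := by
      have h1 : hSfin.toFinset.card * (q - 1) = ((q - 1) * n.choose d ^ 2) * (q - 1) := by
        rw [← key, hprod]; ring
      have hqpos : 0 < q - 1 := by omega
      exact Nat.eq_of_mul_eq_mul_right hqpos h1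
    rw [Set.ncard_eq_toFinset_card _ hSfin]
    exact hfin
  · -- no weights strictly between
    intro h hlb hub
    have hset : {M ∈ {M : Fin n → Fin n → F | (∀ i, M i ∈ C) ∧ ∀ j, (fun i => M i j) ∈ C} |
        wtM M = h} = ∅ := by
      rw [Set.eq_empty_iff_forall_notMem]
      rintro M ⟨⟨h1, h2⟩, hwM⟩
      obtain ⟨c, ⟨hc, hcd⟩, r, ⟨hr, hrd⟩, hM⟩ := decomp M h1 h2 (by omega) (by omega)
      have hw : wtM M = d ^ 2 := by
        rw [hM, wt_outer, hcd, hrd, sq]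
      omega
    rw [hset, Set.ncard_empty]
end

section
/- If two systematic linear codes R and C both have the multiplicity property I(h) = (h/n) E(h), then the set of rank-one codewords of the product code P = R × C, with enumerators restricted to weights below the rank-one threshold h_o, also satisfies I_P(h) = (h/n_p) E_P(h) for all 0 < h < h_o, where n_p = n_r n_c. -/
lemma reindex_aux (a b : ℕ) (f : ℕ → ℕ → ℚ)
    (h0 : ∀ m, f 0 m = 0) (h0' : ∀ i, f i 0 = 0)
    (ha : ∀ i m, a < i → f i m = 0) (hb : ∀ i m, b < m → f i m = 0) :
    ∑ w ∈ Finset.range (a * b + 1), ∑ i ∈ w.divisors, f i (w / i)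
      = ∑ i ∈ Finset.range (a + 1), ∑ m ∈ Finset.range (b + 1), f i m := by
  rw [Finset.sum_sigma' (Finset.range (a * b + 1)) (fun w => w.divisors)
    (fun w i => f i (w / i)),
    Finset.sum_sigma' (Finset.range (a + 1)) (fun _ => Finset.range (b + 1))
    (fun i m => f i m)]
  refine Finset.sum_bij_ne_zero (fun p _ _ => ⟨p.2, p.1 / p.2⟩) ?_ ?_ ?_ ?_
  · rintro ⟨w, i⟩ hmem hne
    dsimp only at hne ⊢
    simp only [Finset.mem_sigma, Finset.mem_range, Nat.mem_divisors] at hmem ⊢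
    obtain ⟨hw, hiw, hw0⟩ := hmem
    constructor
    · by_contra hcon
      exact hne (ha _ _ (by omega))
    · by_contra hcon
      exact hne (hb _ _ (by omega))
  · rintro ⟨w, i⟩ h1 h1' ⟨w', i'⟩ h2 h2' heq
    simp only [Finset.mem_sigma, Finset.mem_range, Nat.mem_divisors] at h1 h2
    obtain ⟨hw, hiw, hw0⟩ := h1
    obtain ⟨hw', hiw', hw0'⟩ := h2
    dsimp only at heq
    obtain ⟨hi, hdiv⟩ := Sigma.mk.inj_iff.mp heq
    subst hi
    have : w = w' := by
      have e1 := Nat.div_mul_cancel hiw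
      have e2 := Nat.div_mul_cancel hiw'
      have h3 := eq_of_heq hdiv
      rw [h3] at e1
      omega
    subst this; rfl
  · rintro ⟨i, m⟩ hmem hne
    simp only [Finset.mem_sigma, Finset.mem_range] at hmem
    have hi0 : 0 < i := by
      rcases Nat.eq_zero_or_pos i with h | h
      · subst h; exact absurd (h0 m) hne
      · exact h
    have hm0 : 0 < m := by
      rcases Nat.eq_zero_or_pos m with h | h
      · subst h; exact absurd (h0' i) hne
      · exact h
    refine ⟨⟨i * m, i⟩, ?_, ?_, ?_⟩
    · simp only [Finset.mem_sigma, Finset.mem_range, Nat.mem_divisors]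
      exact ⟨by have : i * m ≤ a * b := Nat.mul_le_mul (by omega) (by omega); omega,
        ⟨Dvd.intro m rfl, by positivity⟩⟩
    · simpa [Nat.mul_div_cancel_left _ hi0] using hne
    · simp [Nat.mul_div_cancel_left _ hi0]
  · intros; rfl

/-- If the component codes `R` and `C` satisfy the multiplicity property
`I(h) = (h/n) E(h)`, then the rank-one part of the product code `P = R × C`
(whose IOWE for `0 < h < h_o` is given by the divisor-sum formula) also satisfies
`I_P(h) = (h/(n_r n_c)) E_P(h)` for all `0 < h < h_o`. -/
theorem stmt8 (q kr kc nr nc ho : ℕ) (hq : 2 ≤ q)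
    (hkr : 0 < kr) (hkc : 0 < kc) (hnr : 0 < nr) (hnc : 0 < nc)
    (OR OC : ℕ → ℕ → ℕ)
    (hORz : ∀ i j, kr < i → OR i j = 0)
    (hOCz : ∀ i j, kc < i → OC i j = 0)
    (hmultR : ∀ h : ℕ, ∑ w ∈ Finset.range (kr + 1), (w : ℚ) / kr * OR w h
      = (h : ℚ) / nr * ∑ w ∈ Finset.range (kr + 1), (OR w h : ℚ))
    (hmultC : ∀ h : ℕ, ∑ w ∈ Finset.range (kc + 1), (w : ℚ) / kc * OC w h
      = (h : ℚ) / nc * ∑ w ∈ Finset.range (kc + 1), (OC w h : ℚ))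
    (OP : ℕ → ℕ → ℚ) (EP : ℕ → ℚ)
    (hOP : ∀ w h : ℕ, 0 < h → h < ho →
      OP w h = 1 / ((q : ℚ) - 1) * ∑ i ∈ w.divisors, ∑ j ∈ h.divisors,
        (OR i j : ℚ) * (OC (w / i) (h / j) : ℚ))
    (hEP : ∀ h : ℕ, 0 < h → h < ho →
      EP h = 1 / ((q : ℚ) - 1) * ∑ j ∈ h.divisors,
        (∑ w ∈ Finset.range (kr + 1), (OR w j : ℚ)) *
        (∑ w ∈ Finset.range (kc + 1), (OC w (h / j) : ℚ))) :
    ∀ h : ℕ, 0 < h → h < ho →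
      ∑ w ∈ Finset.range (kr * kc + 1), (w : ℚ) / (kr * kc) * OP w h
        = (h : ℚ) / (nr * nc) * EP h := by
  intro h hpos hlt
  have hkrQ : (kr : ℚ) ≠ 0 := Nat.cast_ne_zero.mpr hkr.ne'
  have hkcQ : (kc : ℚ) ≠ 0 := Nat.cast_ne_zero.mpr hkc.ne'
  set F : ℕ → ℕ → ℕ → ℚ := fun j i m =>
    ((i : ℚ) / kr * OR i j) * ((m : ℚ) / kc * OC m (h / j)) with hF
  -- Step 1: rewrite the LHS
  have step1a : ∀ w ∈ Finset.range (kr * kc + 1), (w : ℚ) / (kr * kc) * OP w h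
      = ∑ j ∈ h.divisors, 1 / ((q : ℚ) - 1) * ∑ i ∈ w.divisors, F j i (w / i) := by
    intro w _
    rw [hOP w h hpos hlt,
      Finset.sum_comm (s := w.divisors) (t := h.divisors)
        (f := fun i j => (OR i j : ℚ) * (OC (w / i) (h / j) : ℚ)),
      Finset.mul_sum, Finset.mul_sum]
    refine Finset.sum_congr rfl fun j _ => ?_
    simp only [Finset.mul_sum]
    refine Finset.sum_congr rfl fun i hi => ?_
    have hiw : i ∣ w := (Nat.mem_divisors.mp hi).1
    have hw : (i : ℚ) * ((w / i : ℕ) : ℚ) = (w : ℚ) := by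
      rw [← Nat.cast_mul, Nat.mul_div_cancel' hiw]
    rw [hF]
    dsimp only
    rw [← hw]
    field_simp
  have step1 : ∑ w ∈ Finset.range (kr * kc + 1), (w : ℚ) / (kr * kc) * OP w h
      = 1 / ((q : ℚ) - 1) * ∑ j ∈ h.divisors,
          ∑ w ∈ Finset.range (kr * kc + 1), ∑ i ∈ w.divisors, F j i (w / i) := by
    rw [Finset.sum_congr rfl step1a, Finset.sum_comm, Finset.mul_sum]
    exact Finset.sum_congr rfl fun j _ => (Finset.mul_sum _ _ _).symm
  rw [step1, hEP h hpos hlt]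
  rw [Finset.mul_sum, Finset.mul_sum, Finset.mul_sum]
  refine Finset.sum_congr rfl fun j hj => ?_
  have hjh : j ∣ h := (Nat.mem_divisors.mp hj).1
  -- Step 2: reindex
  have step2 : ∑ w ∈ Finset.range (kr * kc + 1), ∑ i ∈ w.divisors, F j i (w / i)
      = (∑ i ∈ Finset.range (kr + 1), (i : ℚ) / kr * OR i j) *
        (∑ m ∈ Finset.range (kc + 1), (m : ℚ) / kc * OC m (h / j)) := by
    rw [Finset.sum_mul_sum, reindex_aux kr kc (fun i m => F j i m)
      (fun m => by simp [hF]) (fun i => by simp [hF])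
      (fun i m hi => by simp [hF, hORz i j hi])
      (fun i m hm => by simp [hF, hOCz m (h / j) hm])]
  rw [step2, hmultR j, hmultC (h / j)]
  have hjQ : (j : ℚ) * ((h / j : ℕ) : ℚ) = (h : ℚ) := by
    rw [← Nat.cast_mul, Nat.mul_div_cancel' hjh]
  have key : ((j : ℚ) / nr * ∑ w ∈ Finset.range (kr + 1), (OR w j : ℚ)) *
        (((h / j : ℕ) : ℚ) / nc * ∑ w ∈ Finset.range (kc + 1), (OC w (h / j) : ℚ))
      = ((j : ℚ) * ((h / j : ℕ) : ℚ)) / (nr * nc) *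
        ((∑ w ∈ Finset.range (kr + 1), (OR w j : ℚ)) *
          ∑ w ∈ Finset.range (kc + 1), (OC w (h / j) : ℚ)) := by ring
  rw [key, hjQ]
  ring
end

section
/- MacWilliams identity for split weight enumerators: if C is an (n,k) linear code over F_q with coordinates partitioned into sets of sizes n_1 and n_2, and A(w,v) is its split weight enumerator, then the split weight enumerator of the dual code satisfies A^⊥(α,β) = (1/|C|) * sum_{w=0}^{n_1} sum_{v=0}^{n_2} A(w,v) K_α(w; n_1) K_β(v; n_2), where K_β(v; γ) = sum_{j=0}^{β} binomial(γ-v, β-j) binomial(v, j) (-1)^j (q-1)^{β-j} is the Krawtchouk polynomial. -/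
open Finset

set_option linter.unusedSectionVars false
set_option linter.unreachableTactic false
set_option linter.unusedTactic false
set_option maxHeartbeats 1600000

section MacWAux

variable {F : Type*} [Field F] [Fintype F] [DecidableEq F]


variable {F : Type*} [Field F] [Fintype F] [DecidableEq F]

private lemma macw_ncard_eq (α : Type*) [Fintype α] (s : Set α) [DecidablePred (· ∈ s)] :
    s.ncard = (univ.filter (· ∈ s)).card := by
  rw [← Set.ncard_coe_finset]
  congr 1
  ext x; simp

private lemma macw_map_sum (ψ : AddChar F ℂ) {ι : Type*} (s : Finset ι) (f : ι → F) :
    ψ (∑ i ∈ s, f i) = ∏ i ∈ s, ψ (f i) := by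
  classical
  induction s using Finset.cons_induction with
  | empty => simp
  | cons a s ha ih => rw [Finset.sum_cons, Finset.prod_cons, AddChar.map_add_eq_mul, ih]

private lemma macw_e (ψ : AddChar F ℂ) (hψ : ψ.IsPrimitive) (a : F) :
    ∑ t ∈ univ.filter (fun t : F => t ≠ 0), ψ (t * a)
      = if a = 0 then (Fintype.card F : ℂ) - 1 else -1 := by
  have h0 : ∑ t : F, ψ (t * a) = if a = 0 then (Fintype.card F : ℂ) else 0 := by
    rw [AddChar.sum_mulShift a hψ]
    split_ifs <;> simp
  have hsplit := Finset.sum_erase_add univ (fun t : F => ψ (t * a)) (mem_univ (0 : F))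
  rw [h0] at hsplit
  simp only [zero_mul, AddChar.map_zero_eq_one] at hsplit
  rw [filter_ne']
  split_ifs with h
  · rw [if_pos h] at hsplit; linear_combination hsplit
  · rw [if_neg h] at hsplit; linear_combination hsplit



private lemma macw_count {γ β j : ℕ} (hj : j ≤ β) (T : Finset (Fin γ)) :
    ((Finset.univ.powersetCard β).filter fun S => #(S ∩ T) = j).card
      = (#T).choose j * (γ - #T).choose (β - j) := by
  have hcompl : #Tᶜ = γ - #T := by
    rw [Finset.card_compl, Fintype.card_fin]
  rw [← Finset.card_powersetCard j T, ← hcompl, ← Finset.card_powersetCard (β - j) Tᶜ,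
    ← Finset.card_product]
  apply Finset.card_bij' (fun S _ => (S ∩ T, S \ T)) (fun p _ => p.1 ∪ p.2)
  · intro S hS
    rw [mem_filter, Finset.mem_powersetCard] at hS
    obtain ⟨⟨-, hcard⟩, hint⟩ := hS
    have hsd : #(S \ T) = β - j := by
      have := Finset.card_inter_add_card_sdiff S T
      omega
    rw [Finset.mem_product]
    refine ⟨Finset.mem_powersetCard.2 ⟨Finset.inter_subset_right, hint⟩,
      Finset.mem_powersetCard.2 ⟨?_, hsd⟩⟩
    intro x hx
    rw [Finset.mem_sdiff] at hx
    exact Finset.mem_compl.2 hx.2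
  · intro p hp
    rw [Finset.mem_product, Finset.mem_powersetCard, Finset.mem_powersetCard] at hp
    obtain ⟨⟨hAT, hA⟩, hBT, hB⟩ := hp
    have hdisj : Disjoint p.1 p.2 := by
      refine Finset.disjoint_left.2 fun x hx hx2 => ?_
      exact (Finset.mem_compl.1 (hBT hx2)) (hAT hx)
    rw [mem_filter, Finset.mem_powersetCard]
    have hBnotT : ∀ x ∈ p.2, x ∉ T := fun x hx => Finset.mem_compl.1 (hBT hx)
    constructor
    · refine ⟨Finset.subset_univ _, ?_⟩
      rw [Finset.card_union_of_disjoint hdisj, hA, hB]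
      omega
    · have : (p.1 ∪ p.2) ∩ T = p.1 := by
        ext x
        simp only [Finset.mem_inter, Finset.mem_union]
        constructor
        · rintro ⟨hx1 | hx2, hxT⟩
          · exact hx1
          · exact absurd hxT (hBnotT x hx2)
        · intro hx; exact ⟨Or.inl hx, hAT hx⟩
      rw [this, hA]
  · intro S hS
    ext x
    simp only [Finset.mem_union, Finset.mem_inter, Finset.mem_sdiff]
    tauto
  · intro p hp
    rw [Finset.mem_product, Finset.mem_powersetCard, Finset.mem_powersetCard] at hp
    obtain ⟨⟨hAT, hA⟩, hBT, hB⟩ := hp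
    have hBnotT : ∀ x ∈ p.2, x ∉ T := fun x hx => Finset.mem_compl.1 (hBT hx)
    have h1 : (p.1 ∪ p.2) ∩ T = p.1 := by
      ext x
      simp only [Finset.mem_inter, Finset.mem_union]
      constructor
      · rintro ⟨hx1 | hx2, hxT⟩
        · exact hx1
        · exact absurd hxT (hBnotT x hx2)
      · intro hx; exact ⟨Or.inl hx, hAT hx⟩
    have h2 : (p.1 ∪ p.2) \ T = p.2 := by
      ext x
      simp only [Finset.mem_sdiff, Finset.mem_union]
      constructor
      · rintro ⟨hx1 | hx2, hxT⟩
        · exact absurd (hAT hx1) hxT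
        · exact hx2
      · intro hx; exact ⟨Or.inr hx, hBnotT x hx⟩
    rw [h1, h2]

private lemma macw_sphere (ψ : AddChar F ℂ) (hψ : ψ.IsPrimitive) {γ : ℕ}
    (c : Fin γ → F) (β : ℕ) :
    ∑ x ∈ univ.filter (fun x : Fin γ → F => hammingNorm x = β), ψ (∑ i, x i * c i)
      = ∑ j ∈ Finset.range (β + 1),
          ((γ - hammingNorm c).choose (β - j) : ℂ) * ((hammingNorm c).choose j : ℂ)
            * (-1) ^ j * ((Fintype.card F : ℂ) - 1) ^ (β - j) := by
  set T : Finset (Fin γ) := univ.filter (fun i => c i ≠ 0) with hT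
  have hTc : hammingNorm c = #T := rfl
  -- Step 1 : fiber the sum over supports
  have step1 : ∑ x ∈ univ.filter (fun x : Fin γ → F => hammingNorm x = β), ψ (∑ i, x i * c i)
      = ∑ S ∈ univ.powersetCard β,
          ∑ x ∈ univ.filter (fun x : Fin γ → F => univ.filter (fun i => x i ≠ 0) = S),
            ψ (∑ i, x i * c i) := by
    rw [← Finset.sum_fiberwise_of_maps_to (g := fun x : Fin γ → F => univ.filter (fun i => x i ≠ 0))
      (t := univ.powersetCard β) ?_ (fun x => ψ (∑ i, x i * c i))]
    · apply Finset.sum_congr rfl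
      intro S hS
      rw [Finset.mem_powersetCard] at hS
      congr 1
      rw [Finset.filter_filter]
      apply Finset.filter_congr
      intro x _
      constructor
      · rintro ⟨-, h2⟩; exact h2
      · intro h; exact ⟨by rw [show hammingNorm x = #(univ.filter fun i => x i ≠ 0) from rfl, h, hS.2], h⟩
    · intro x hx
      rw [Finset.mem_filter] at hx
      exact Finset.mem_powersetCard.2 ⟨Finset.subset_univ _, hx.2⟩
  -- Step 2 : inner sum over a fixed support
  have step2 : ∀ S ∈ univ.powersetCard β,
      ∑ x ∈ univ.filter (fun x : Fin γ → F => univ.filter (fun i => x i ≠ 0) = S),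
          ψ (∑ i, x i * c i)
        = ∏ i ∈ S, (if c i = 0 then (Fintype.card F : ℂ) - 1 else -1) := by
    intro S hS
    have : ∏ i ∈ S, (if c i = 0 then (Fintype.card F : ℂ) - 1 else -1)
        = ∏ i ∈ S, ∑ t ∈ univ.filter (fun t : F => t ≠ 0), ψ (t * c i) := by
      apply Finset.prod_congr rfl
      intro i _
      rw [macw_e ψ hψ]
    rw [this, Finset.prod_sum]
    apply Finset.sum_nbij' (i := fun x => fun i (_ : i ∈ S) => x i)
      (j := fun p => fun i => if h : i ∈ S then p i h else 0)
    · intro x hx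
      rw [Finset.mem_filter] at hx
      rw [Finset.mem_pi]
      intro i hi
      rw [Finset.mem_filter]
      refine ⟨Finset.mem_univ _, ?_⟩
      rw [← hx.2] at hi
      exact (Finset.mem_filter.1 hi).2
    · intro p hp
      rw [Finset.mem_pi] at hp
      rw [Finset.mem_filter]
      refine ⟨Finset.mem_univ _, ?_⟩
      ext i
      rw [Finset.mem_filter]
      constructor
      · rintro ⟨-, hne⟩
        by_contra hiS
        simp only [dif_neg hiS] at hne
        exact hne rfl
      · intro hi
        refine ⟨Finset.mem_univ _, ?_⟩
        show (if h : i ∈ S then p i h else 0) ≠ 0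
        rw [dif_pos hi]
        exact (Finset.mem_filter.1 (hp i hi)).2
    · intro x hx
      rw [Finset.mem_filter] at hx
      ext i
      by_cases hi : i ∈ S
      · rw [dif_pos hi]
      · rw [dif_neg hi]
        by_contra hne
        exact hi (hx.2 ▸ Finset.mem_filter.2 ⟨Finset.mem_univ _, fun h => (hne h.symm).elim⟩)
    · intro p hp
      funext i hi
      show (if h : i ∈ S then p i h else 0) = p i hi
      rw [dif_pos hi]
    · intro x hx
      rw [Finset.mem_filter] at hx
      rw [macw_map_sum ψ]
      rw [← Finset.prod_subset (Finset.subset_univ S) (f := fun i => ψ (x i * c i))]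
      · exact (Finset.prod_attach S fun i => ψ (x i * c i)).symm
      · intro i _ hiS
        have : x i = 0 := by
          by_contra hne
          exact hiS (hx.2 ▸ Finset.mem_filter.2 ⟨Finset.mem_univ _, hne⟩)
        rw [this, zero_mul, AddChar.map_zero_eq_one]
  rw [step1, Finset.sum_congr rfl step2]
  -- Step 3 : rewrite the product as powers
  have step3 : ∀ S ∈ univ.powersetCard β,
      ∏ i ∈ S, (if c i = 0 then (Fintype.card F : ℂ) - 1 else -1)
        = ((Fintype.card F : ℂ) - 1) ^ (β - #(S ∩ T)) * (-1) ^ #(S ∩ T) := by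
    intro S hS
    rw [Finset.mem_powersetCard] at hS
    rw [Finset.prod_ite (fun _ => (Fintype.card F : ℂ) - 1) (fun _ => (-1 : ℂ))]
    rw [Finset.prod_const, Finset.prod_const]
    have h1 : S.filter (fun i => ¬ c i = 0) = S ∩ T := by
      ext i
      simp only [Finset.mem_filter, Finset.mem_inter, hT, Finset.mem_univ, true_and]
      try tauto
    have h2 : S.filter (fun i => c i = 0) = S \ T := by
      ext i
      simp only [Finset.mem_filter, Finset.mem_sdiff, hT, Finset.mem_univ, true_and]
      tauto
    have h3 : #(S \ T) = β - #(S ∩ T) := by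
      have := Finset.card_inter_add_card_sdiff S T
      omega
    rw [h1, h2, h3]
  rw [Finset.sum_congr rfl step3]
  -- Step 4 : group by the size of the intersection with T
  rw [← Finset.sum_fiberwise_of_maps_to (g := fun S : Finset (Fin γ) => #(S ∩ T))
    (t := Finset.range (β + 1)) ?_ _]
  · apply Finset.sum_congr rfl
    intro j hj
    rw [Finset.mem_range] at hj
    have hjβ : j ≤ β := by omega
    have hconst : ∀ S ∈ (univ.powersetCard β).filter (fun S => #(S ∩ T) = j),
        ((Fintype.card F : ℂ) - 1) ^ (β - #(S ∩ T)) * (-1) ^ #(S ∩ T)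
          = ((Fintype.card F : ℂ) - 1) ^ (β - j) * (-1) ^ j := by
      intro S hS
      rw [(Finset.mem_filter.1 hS).2]
    rw [Finset.sum_congr rfl hconst, Finset.sum_const, macw_count hjβ T]
    rw [hTc]
    push_cast
    ring
  · intro S hS
    rw [Finset.mem_powersetCard] at hS
    rw [Finset.mem_range]
    show #(S ∩ T) < β + 1
    have : #(S ∩ T) ≤ #S := Finset.card_le_card Finset.inter_subset_left
    omega

end MacWAux

/-- MacWilliams identity for split weight enumerators: for a linear code `C` over
`F_q` with coordinates partitioned into sets of sizes `n_1` and `n_2`, the split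
weight enumerator of the dual code satisfies
`A^⊥(α,β) = (1/|C|) ∑_w ∑_v A(w,v) K_α(w;n_1) K_β(v;n_2)`. -/
theorem stmt9 (F : Type*) [Field F] [Fintype F] [DecidableEq F] (q n1 n2 : ℕ)
    (hq : Fintype.card F = q)
    (C : Submodule F ((Fin n1 → F) × (Fin n2 → F)))
    (K : ℕ → ℕ → ℕ → ℚ)
    (hK : ∀ β v γ : ℕ, K β v γ = ∑ j ∈ Finset.range (β + 1),
      ((γ - v).choose (β - j) : ℚ) * (v.choose j : ℚ) * (-1) ^ j * ((q : ℚ) - 1) ^ (β - j))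
    (Cd : Set ((Fin n1 → F) × (Fin n2 → F)))
    (hCd : Cd = {x | ∀ c ∈ C, (∑ i, x.1 i * c.1 i) + (∑ i, x.2 i * c.2 i) = 0})
    (α β : ℕ) :
    (Set.ncard {x ∈ Cd | hammingNorm x.1 = α ∧ hammingNorm x.2 = β} : ℚ)
      = 1 / (Nat.card C : ℚ) *
        ∑ w ∈ Finset.range (n1 + 1), ∑ v ∈ Finset.range (n2 + 1),
          (Set.ncard {c : (Fin n1 → F) × (Fin n2 → F) |
              c ∈ C ∧ hammingNorm c.1 = w ∧ hammingNorm c.2 = v} : ℚ)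
            * K α w n1 * K β v n2 := by
  classical
  subst hq
  subst hCd
  have E : Unit := () -- dummy
  set q := Fintype.card F with hq
  set ψ : AddChar F ℂ := AddChar.FiniteField.primitiveChar_to_Complex F with hψdef
  have hψ : ψ.IsPrimitive := AddChar.FiniteField.primitiveChar_to_Complex_isPrimitive F
  set b : ((Fin n1 → F) × (Fin n2 → F)) → ((Fin n1 → F) × (Fin n2 → F)) → F := fun x c => (∑ i, x.1 i * c.1 i) + (∑ i, x.2 i * c.2 i) with hb
  set CF : Finset ((Fin n1 → F) × (Fin n2 → F)) := univ.filter (· ∈ C) with hCF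
  set S1 : Finset ((Fin n1 → F) × (Fin n2 → F)) :=
    univ.filter (fun x : (Fin n1 → F) × (Fin n2 → F) => hammingNorm x.1 = α ∧ hammingNorm x.2 = β) with hS1
  -- cardinality of the code
  have hcardC : Nat.card C = CF.card := by
    have h1 : Nat.card C = ((C : Set ((Fin n1 → F) × (Fin n2 → F)))).ncard :=
      Nat.card_coe_set_eq _
    rw [h1, macw_ncard_eq]
    try congr 1
    try (ext x; simp [hCF])
  -- bilinearity facts
  have hadd : ∀ x y z : (Fin n1 → F) × (Fin n2 → F), b x (y + z) = b x y + b x z := by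
    intro x y z
    simp only [hb, Prod.fst_add, Prod.snd_add, Pi.add_apply, mul_add, Finset.sum_add_distrib]
    try ring
  have hsmul : ∀ (x : ((Fin n1 → F) × (Fin n2 → F))) (a : F) (y : ((Fin n1 → F) × (Fin n2 → F))), b x (a • y) = a * b x y := by
    intro x a y
    simp only [hb, Prod.smul_fst, Prod.smul_snd, Pi.smul_apply, smul_eq_mul, mul_add,
      Finset.mul_sum]
    congr 1 <;> exact Finset.sum_congr rfl fun i _ => by ring
  -- ψ is nontrivial
  have hψne : ψ ≠ 1 := by
    have := hψ (one_ne_zero (α := F))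
    rwa [AddChar.mulShift_one] at this
  -- Poisson summation inner step
  have poisson : ∀ x : (Fin n1 → F) × (Fin n2 → F), ∑ c ∈ CF, ψ (b x c)
      = if (∀ c ∈ C, b x c = 0) then (CF.card : ℂ) else 0 := by
    intro x
    split_ifs with hx
    · have : ∀ c ∈ CF, ψ (b x c) = 1 := by
        intro c hc
        rw [hx c (by simpa [hCF] using hc), AddChar.map_zero_eq_one]
      rw [Finset.sum_congr rfl this, Finset.sum_const, nsmul_eq_mul, mul_one]
    · push_neg at hx
      obtain ⟨c0, hc0C, hbc0⟩ := hx
      have hsub : ∑ c ∈ CF, ψ (b x c) = ∑ c : C, ψ (b x c.1) :=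
        Finset.sum_subtype CF (fun c => by simp [hCF]) (fun c => ψ (b x c))
      rw [hsub]
      set φ : ↥C →+ F := AddMonoidHom.mk' (fun c : ↥C => b x c.1)
        (fun c d => by
          show b x ((c + d : ↥C) : (Fin n1 → F) × (Fin n2 → F)) = b x c.1 + b x d.1
          rw [Submodule.coe_add, hadd]) with hφ
      have hχ : ψ.compAddMonoidHom φ ≠ 1 := by
        rw [AddChar.ne_one_iff]
        obtain ⟨a, ha⟩ := AddChar.ne_one_iff.1 hψne
        refine ⟨⟨(a * (b x c0)⁻¹) • c0, C.smul_mem _ hc0C⟩, ?_⟩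
        show ψ (b x ((a * (b x c0)⁻¹) • c0)) ≠ 1
        rw [hsmul, mul_assoc, inv_mul_cancel₀ hbc0, mul_one]
        exact ha
      exact AddChar.sum_eq_zero_of_ne_one hχ
  -- The two sides of Poisson summation
  have hLHS : ∑ x ∈ S1, ∑ c ∈ CF, ψ (b x c)
      = ((S1.filter (fun x => ∀ c ∈ C, b x c = 0)).card : ℂ) * (CF.card : ℂ) := by
    rw [Finset.sum_congr rfl (fun x _ => poisson x), ← Finset.sum_filter,
      Finset.sum_const, nsmul_eq_mul]
  -- factorization of the sphere sum
  have hKcast : ∀ (a v n : ℕ), ((K a v n : ℚ) : ℂ)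
      = ∑ j ∈ Finset.range (a + 1), ((n - v).choose (a - j) : ℂ) * ((v.choose j : ℕ) : ℂ)
          * (-1) ^ j * ((q : ℂ) - 1) ^ (a - j) := by
    intro a v n
    rw [hK]
    push_cast
    ring
  have hfac : ∀ c : (Fin n1 → F) × (Fin n2 → F), ∑ x ∈ S1, ψ (b x c)
      = ((K α (hammingNorm c.1) n1 : ℚ) : ℂ) * ((K β (hammingNorm c.2) n2 : ℚ) : ℂ) := by
    intro c
    have hprod : S1 = (univ.filter (fun x1 : Fin n1 → F => hammingNorm x1 = α)) ×ˢ
        (univ.filter (fun x2 : Fin n2 → F => hammingNorm x2 = β)) := by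
      ext x
      simp only [hS1, Finset.mem_filter, Finset.mem_product, Finset.mem_univ, true_and]
    rw [hprod, Finset.sum_product]
    have : ∀ x1 ∈ univ.filter (fun x1 : Fin n1 → F => hammingNorm x1 = α),
        ∀ x2 ∈ univ.filter (fun x2 : Fin n2 → F => hammingNorm x2 = β),
        ψ (b (x1, x2) c) = ψ (∑ i, x1 i * c.1 i) * ψ (∑ i, x2 i * c.2 i) := by
      intro x1 _ x2 _
      rw [hb]
      exact AddChar.map_add_eq_mul ψ _ _
    calc ∑ x1 ∈ univ.filter (fun x1 : Fin n1 → F => hammingNorm x1 = α),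
          ∑ x2 ∈ univ.filter (fun x2 : Fin n2 → F => hammingNorm x2 = β), ψ (b (x1, x2) c)
        = ∑ x1 ∈ univ.filter (fun x1 : Fin n1 → F => hammingNorm x1 = α),
          ∑ x2 ∈ univ.filter (fun x2 : Fin n2 → F => hammingNorm x2 = β),
            ψ (∑ i, x1 i * c.1 i) * ψ (∑ i, x2 i * c.2 i) := by
          apply Finset.sum_congr rfl; intro x1 h1; apply Finset.sum_congr rfl; intro x2 h2
          exact this x1 h1 x2 h2
      _ = (∑ x1 ∈ univ.filter (fun x1 : Fin n1 → F => hammingNorm x1 = α),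
            ψ (∑ i, x1 i * c.1 i)) *
          (∑ x2 ∈ univ.filter (fun x2 : Fin n2 → F => hammingNorm x2 = β),
            ψ (∑ i, x2 i * c.2 i)) := by
          rw [Finset.sum_mul_sum]
      _ = _ := by
          rw [macw_sphere ψ hψ c.1 α, macw_sphere ψ hψ c.2 β, hKcast, hKcast, ← hq]
  -- group the code sum by split weights
  have hmaps : ∀ c ∈ CF, (hammingNorm c.1, hammingNorm c.2)
      ∈ Finset.range (n1 + 1) ×ˢ Finset.range (n2 + 1) := by
    intro c _
    rw [Finset.mem_product, Finset.mem_range, Finset.mem_range]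
    constructor
    · have : hammingNorm c.1 ≤ n1 := by
        simpa [hammingNorm] using Finset.card_filter_le (univ : Finset (Fin n1)) (fun i => c.1 i ≠ 0)
      omega
    · have : hammingNorm c.2 ≤ n2 := by
        simpa [hammingNorm] using Finset.card_filter_le (univ : Finset (Fin n2)) (fun i => c.2 i ≠ 0)
      omega
  have hgroup : ∑ c ∈ CF, ((K α (hammingNorm c.1) n1 : ℚ) : ℂ) * ((K β (hammingNorm c.2) n2 : ℚ) : ℂ)
      = ∑ w ∈ Finset.range (n1 + 1), ∑ v ∈ Finset.range (n2 + 1),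
          ((CF.filter (fun c : (Fin n1 → F) × (Fin n2 → F) => hammingNorm c.1 = w ∧ hammingNorm c.2 = v)).card : ℂ)
            * ((K α w n1 : ℚ) : ℂ) * ((K β v n2 : ℚ) : ℂ) := by
    rw [← Finset.sum_fiberwise_of_maps_to (g := fun c : (Fin n1 → F) × (Fin n2 → F) => (hammingNorm c.1, hammingNorm c.2))
      hmaps (fun c => ((K α (hammingNorm c.1) n1 : ℚ) : ℂ) * ((K β (hammingNorm c.2) n2 : ℚ) : ℂ)),
      Finset.sum_product]
    apply Finset.sum_congr rfl
    intro w _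
    apply Finset.sum_congr rfl
    intro v _
    have hfeq : CF.filter (fun c : (Fin n1 → F) × (Fin n2 → F) => (hammingNorm c.1, hammingNorm c.2) = (w, v))
        = CF.filter (fun c : (Fin n1 → F) × (Fin n2 → F) => hammingNorm c.1 = w ∧ hammingNorm c.2 = v) := by
      apply Finset.filter_congr
      intro c _
      rw [Prod.mk.injEq]
    rw [hfeq]
    have : ∀ c ∈ CF.filter (fun c : (Fin n1 → F) × (Fin n2 → F) => hammingNorm c.1 = w ∧ hammingNorm c.2 = v),
        ((K α (hammingNorm c.1) n1 : ℚ) : ℂ) * ((K β (hammingNorm c.2) n2 : ℚ) : ℂ)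
          = ((K α w n1 : ℚ) : ℂ) * ((K β v n2 : ℚ) : ℂ) := by
      intro c hc
      obtain ⟨-, h1, h2⟩ := Finset.mem_filter.1 hc
      rw [h1, h2]
    rw [Finset.sum_congr rfl this, Finset.sum_const, nsmul_eq_mul, mul_assoc]
  -- the main identity over ℂ
  have hMain : ((S1.filter (fun x => ∀ c ∈ C, b x c = 0)).card : ℂ) * (CF.card : ℂ)
      = ∑ w ∈ Finset.range (n1 + 1), ∑ v ∈ Finset.range (n2 + 1),
          ((CF.filter (fun c : (Fin n1 → F) × (Fin n2 → F) => hammingNorm c.1 = w ∧ hammingNorm c.2 = v)).card : ℂ)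
            * ((K α w n1 : ℚ) : ℂ) * ((K β v n2 : ℚ) : ℂ) := by
    rw [← hLHS, Finset.sum_comm, Finset.sum_congr rfl (fun c _ => hfac c), hgroup]
  -- identify the set cardinalities
  have hL : Set.ncard {x : (Fin n1 → F) × (Fin n2 → F) | x ∈ {x : (Fin n1 → F) × (Fin n2 → F) | ∀ c ∈ C, (∑ i, x.1 i * c.1 i) + (∑ i, x.2 i * c.2 i) = 0}
        ∧ hammingNorm x.1 = α ∧ hammingNorm x.2 = β}
      = (S1.filter (fun x => ∀ c ∈ C, b x c = 0)).card := by
    rw [macw_ncard_eq]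
    congr 1
    rw [hS1, Finset.filter_filter]
    apply Finset.filter_congr
    intro x _
    simp only [Set.mem_setOf_eq, hb]
    tauto
  have hA : ∀ w v : ℕ, Set.ncard {c : (Fin n1 → F) × (Fin n2 → F) | c ∈ C ∧ hammingNorm c.1 = w ∧ hammingNorm c.2 = v}
      = (CF.filter (fun c : (Fin n1 → F) × (Fin n2 → F) => hammingNorm c.1 = w ∧ hammingNorm c.2 = v)).card := by
    intro w v
    rw [macw_ncard_eq]
    congr 1
    ext c
    simp only [Finset.mem_filter, Finset.mem_univ, true_and, Set.mem_setOf_eq, hCF]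
    try tauto
  -- conclude over ℚ via injectivity of the cast to ℂ
  have hCne : (CF.card : ℂ) ≠ 0 := by
    have h0 : (0 : (Fin n1 → F) × (Fin n2 → F)) ∈ CF := by simp [hCF]
    have hpos : 0 < CF.card := Finset.card_pos.2 ⟨0, h0⟩
    exact Nat.cast_ne_zero.2 (Nat.pos_iff_ne_zero.1 hpos)
  apply Rat.cast_injective (α := ℂ)
  push_cast
  simp only [hL, hA, hcardC]
  rw [one_div_mul_eq_div, eq_div_iff hCne]
  exact hMain
end

section
/- The generating-function form of the MacWilliams identity for split weight enumerators: with A(X,Y) = sum_{w,v} A(w,v) X^w Y^v the split weight enumerator polynomial of a linear code C over F_q for an (n_1, n_2) partition, the dual code's split weight enumerator polynomial satisfies A^⊥(X,Y) = (1/|C|) (1 + (q-1)X)^{n_1} (1 + (q-1)Y)^{n_2} A( (1-X)/(1+(q-1)X), (1-Y)/(1+(q-1)Y) ). -/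
open Finset

section MacWilliamsAux

variable {F : Type*} [Field F] [Fintype F] [DecidableEq F]
variable {K : Type*} [Field K]

private lemma addchar_map_sum' {M : Type*} [CommMonoid M] (χ : AddChar F M) {ι : Type*}
    (s : Finset ι) (f : ι → F) : χ (∑ i ∈ s, f i) = ∏ i ∈ s, χ (f i) := by
  classical
  induction s using Finset.cons_induction with
  | empty => simp
  | cons a s ha ih => rw [Finset.sum_cons, Finset.prod_cons, AddChar.map_add_eq_mul, ih]

private lemma weight_sum' {n1 n2 : ℕ}
    (S : Set ((Fin n1 → F) × (Fin n2 → F))) (X Y : ℚ) :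
    ∑ w ∈ Finset.range (n1 + 1), ∑ v ∈ Finset.range (n2 + 1),
      (Set.ncard {x | x ∈ S ∧ hammingNorm x.1 = w ∧ hammingNorm x.2 = v} : ℚ) * X ^ w * Y ^ v
    = ∑ x ∈ (Set.toFinite S).toFinset, X ^ hammingNorm x.1 * Y ^ hammingNorm x.2 := by
  classical
  have hmaps : ∀ x ∈ (Set.toFinite S).toFinset,
      (hammingNorm x.1, hammingNorm x.2) ∈ Finset.range (n1+1) ×ˢ Finset.range (n2+1) := by
    intro x _
    simp only [Finset.mem_product, Finset.mem_range, Nat.lt_succ_iff]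
    exact ⟨by simpa using hammingNorm_le_card_fintype (x := x.1),
      by simpa using hammingNorm_le_card_fintype (x := x.2)⟩
  rw [← Finset.sum_fiberwise_of_maps_to hmaps
    (fun x => X ^ hammingNorm x.1 * Y ^ hammingNorm x.2), Finset.sum_product]
  refine Finset.sum_congr rfl fun w hw => Finset.sum_congr rfl fun v hv => ?_
  have hset : {x | x ∈ S ∧ hammingNorm x.1 = w ∧ hammingNorm x.2 = v}
      = ↑((Set.toFinite S).toFinset.filter
          fun x => (hammingNorm x.1, hammingNorm x.2) = (w, v)) := by
    ext x; simp only [Set.mem_setOf_eq, Finset.coe_filter, Set.Finite.mem_toFinset,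
      Prod.mk.injEq]
  rw [hset, Set.ncard_coe_finset]
  rw [Finset.sum_congr rfl (fun x hx => show X ^ hammingNorm x.1 * Y ^ hammingNorm x.2
      = X ^ w * Y ^ v from by
    simp only [Finset.mem_filter, Prod.mk.injEq] at hx
    rw [hx.2.1, hx.2.2]), Finset.sum_const, nsmul_eq_mul, mul_assoc]

private lemma coord_sum' (χ : AddChar F K) (hχ : χ.IsPrimitive) (t : K) (b : F) :
    ∑ a : F, (if a = 0 then 1 else t) * χ (a * b)
      = if b = 0 then 1 + ((Fintype.card F : K) - 1) * t else 1 - t := by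
  have h1 : ∀ a : F, (if a = 0 then (1:K) else t) * χ (a * b)
      = t * χ (a * b) + (if a = 0 then 1 - t else 0) := by
    intro a
    split_ifs with h
    · simp [h]
    · ring
  rw [Finset.sum_congr rfl fun a _ => h1 a, Finset.sum_add_distrib, ← Finset.mul_sum,
    AddChar.sum_mulShift b hχ, Finset.sum_ite_eq' Finset.univ (0 : F) (fun _ => 1 - t)]
  simp only [Finset.mem_univ, if_true]
  split_ifs with h <;> ring

private lemma block_sum' {n : ℕ} (χ : AddChar F K) (hχ : χ.IsPrimitive) (t : K)
    (c : Fin n → F) :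
    ∑ x : Fin n → F, t ^ hammingNorm x * χ (∑ i, x i * c i)
      = (1 + ((Fintype.card F : K) - 1) * t) ^ (n - hammingNorm c)
        * (1 - t) ^ hammingNorm c := by
  have hterm : ∀ x : Fin n → F, t ^ hammingNorm x * χ (∑ i, x i * c i)
      = ∏ i, (if x i = 0 then 1 else t) * χ (x i * c i) := by
    intro x
    rw [addchar_map_sum', Finset.prod_mul_distrib]
    congr 1
    rw [Finset.prod_ite, Finset.prod_const_one, Finset.prod_const, one_mul, hammingNorm]
  rw [Finset.sum_congr rfl fun x _ => hterm x,
    ← Fintype.prod_sum (fun (i : Fin n) (a : F) => (if a = 0 then (1:K) else t) * χ (a * c i))]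
  rw [Finset.prod_congr rfl fun i _ => coord_sum' χ hχ t (c i)]
  rw [Finset.prod_ite, Finset.prod_const, Finset.prod_const]
  have hcard := Finset.card_filter_add_card_filter_not
    (s := (Finset.univ : Finset (Fin n))) (p := fun i => c i = 0)
  simp only [Finset.card_univ, Fintype.card_fin] at hcard
  have hn : hammingNorm c = #(Finset.univ.filter fun i => ¬ c i = 0) := rfl
  congr 2
  omega

open scoped Classical in
private lemma dual_sum' {n1 n2 : ℕ} (χ : AddChar F K) (hχ : χ.IsPrimitive)
    (C : Submodule F ((Fin n1 → F) × (Fin n2 → F))) (x : (Fin n1 → F) × (Fin n2 → F)) :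
    ∑ c ∈ (Set.toFinite (C : Set ((Fin n1 → F) × (Fin n2 → F)))).toFinset,
        χ ((∑ i, x.1 i * c.1 i) + ∑ i, x.2 i * c.2 i)
      = if (∀ c ∈ C, (∑ i, x.1 i * c.1 i) + (∑ i, x.2 i * c.2 i) = 0)
        then ((Set.toFinite (C : Set ((Fin n1 → F) × (Fin n2 → F)))).toFinset.card : K)
        else 0 := by
  classical
  set CF := (Set.toFinite (C : Set ((Fin n1 → F) × (Fin n2 → F)))).toFinset with hCF
  have hmemCF : ∀ c, c ∈ CF ↔ c ∈ C := by
    intro c; rw [hCF, Set.Finite.mem_toFinset, SetLike.mem_coe]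
  set B : ((Fin n1 → F) × (Fin n2 → F)) → F :=
    fun c => (∑ i, x.1 i * c.1 i) + ∑ i, x.2 i * c.2 i with hB
  have hBadd : ∀ c d, B (c + d) = B c + B d := by
    intro c d
    simp only [hB, Prod.fst_add, Prod.snd_add, Pi.add_apply, mul_add, Finset.sum_add_distrib]
    ring
  have hBsmul : ∀ (u : F) c, B (u • c) = u * B c := by
    intro u c
    simp only [hB, Prod.smul_fst, Prod.smul_snd, Pi.smul_apply, smul_eq_mul, Finset.mul_sum,
      mul_add]
    congr 1 <;> exact Finset.sum_congr rfl fun i _ => by ring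
  show (∑ c ∈ CF, χ (B c)) = if (∀ c ∈ C, B c = 0) then (CF.card : K) else 0
  split_ifs with h
  · rw [Finset.sum_congr rfl fun c hc =>
      show χ (B c) = 1 by rw [h c ((hmemCF c).mp hc), AddChar.map_zero_eq_one],
      Finset.sum_const, nsmul_eq_mul, mul_one]
  · push_neg at h
    obtain ⟨c0, hc0, hb⟩ := h
    have h1 : AddChar.mulShift χ (B c0) ≠ 1 := hχ hb
    obtain ⟨u, hu⟩ := AddChar.ne_one_iff.mp h1
    rw [AddChar.mulShift_apply, mul_comm] at hu
    have htrans : ∑ c ∈ CF, χ (B (c + u • c0)) = ∑ c ∈ CF, χ (B c) := by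
      refine Finset.sum_equiv (Equiv.addRight (u • c0)) (fun c => ?_) (fun c _ => rfl)
      simp only [Equiv.coe_addRight, hmemCF]
      constructor
      · intro hc; exact C.add_mem hc (C.smul_mem u hc0)
      · intro hc
        have := C.sub_mem hc (C.smul_mem u hc0)
        simpa using this
    have hterm : ∀ c, χ (B (c + u • c0)) = χ (B c) * χ (u * B c0) := by
      intro c
      rw [hBadd, hBsmul, AddChar.map_add_eq_mul]
    rw [Finset.sum_congr rfl fun c _ => hterm c, ← Finset.sum_mul] at htrans
    have h0 : (∑ c ∈ CF, χ (B c)) * (χ (u * B c0) - 1) = 0 := by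
      rw [mul_sub, htrans, mul_one, sub_self]
    rcases mul_eq_zero.mp h0 with h' | h'
    · exact h'
    · exact absurd (by linear_combination h' : χ (u * B c0) = 1) hu

open scoped Classical in
private lemma key' {n1 n2 : ℕ} (χ : AddChar F K) (hχ : χ.IsPrimitive)
    (C : Submodule F ((Fin n1 → F) × (Fin n2 → F))) (ξ η : K) :
    ((Set.toFinite (C : Set ((Fin n1 → F) × (Fin n2 → F)))).toFinset.card : K)
      * ∑ x ∈ (Set.toFinite {x : (Fin n1 → F) × (Fin n2 → F) |
            ∀ c ∈ C, (∑ i, x.1 i * c.1 i) + (∑ i, x.2 i * c.2 i) = 0}).toFinset,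
          ξ ^ hammingNorm x.1 * η ^ hammingNorm x.2
    = ∑ c ∈ (Set.toFinite (C : Set ((Fin n1 → F) × (Fin n2 → F)))).toFinset,
        ((1 + ((Fintype.card F : K) - 1) * ξ) ^ (n1 - hammingNorm c.1)
            * (1 - ξ) ^ hammingNorm c.1)
          * ((1 + ((Fintype.card F : K) - 1) * η) ^ (n2 - hammingNorm c.2)
            * (1 - η) ^ hammingNorm c.2) := by
  set CF := (Set.toFinite (C : Set ((Fin n1 → F) × (Fin n2 → F)))).toFinset with hCF
  set DF := (Set.toFinite {x : (Fin n1 → F) × (Fin n2 → F) |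
      ∀ c ∈ C, (∑ i, x.1 i * c.1 i) + (∑ i, x.2 i * c.2 i) = 0}).toFinset with hDF
  set T : K := ∑ x : (Fin n1 → F) × (Fin n2 → F),
      (ξ ^ hammingNorm x.1 * η ^ hammingNorm x.2)
        * ∑ c ∈ CF, χ ((∑ i, x.1 i * c.1 i) + ∑ i, x.2 i * c.2 i) with hT
  have h1 : T = (CF.card : K) * ∑ x ∈ DF, ξ ^ hammingNorm x.1 * η ^ hammingNorm x.2 := by
    rw [hT, Finset.sum_congr rfl fun x _ => by rw [dual_sum' χ hχ C x, mul_ite, mul_zero],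
      ← Finset.sum_filter]
    have hDFf : DF = Finset.univ.filter (fun x : (Fin n1 → F) × (Fin n2 → F) =>
        ∀ c ∈ C, (∑ i, x.1 i * c.1 i) + (∑ i, x.2 i * c.2 i) = 0) := by
      ext x; simp [hDF, Set.Finite.mem_toFinset]
    rw [← hDFf, Finset.mul_sum]
    exact Finset.sum_congr rfl fun x _ => by ring
  have h2 : T = ∑ c ∈ CF,
      ((1 + ((Fintype.card F : K) - 1) * ξ) ^ (n1 - hammingNorm c.1)
          * (1 - ξ) ^ hammingNorm c.1)
        * ((1 + ((Fintype.card F : K) - 1) * η) ^ (n2 - hammingNorm c.2)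
          * (1 - η) ^ hammingNorm c.2) := by
    rw [hT, Finset.sum_congr rfl fun x _ => by rw [Finset.mul_sum], Finset.sum_comm]
    refine Finset.sum_congr rfl fun c hc => ?_
    rw [Fintype.sum_prod_type]
    have hre : ∀ (a : Fin n1 → F) (b : Fin n2 → F),
        (ξ ^ hammingNorm a * η ^ hammingNorm b)
           * χ ((∑ i, a i * c.1 i) + ∑ i, b i * c.2 i)
        = (ξ ^ hammingNorm a * χ (∑ i, a i * c.1 i))
           * (η ^ hammingNorm b * χ (∑ i, b i * c.2 i)) := by
      intro a b; rw [AddChar.map_add_eq_mul]; ring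
    rw [Finset.sum_congr rfl fun a _ => Finset.sum_congr rfl fun b _ => hre a b,
      ← Finset.sum_mul_sum, block_sum' χ hχ ξ c.1, block_sum' χ hχ η c.2]
  rw [← h1, h2]

end MacWilliamsAux

/-- Generating-function form of the MacWilliams identity for split weight enumerators:
`A^⊥(X,Y) = (1/|C|)(1+(q-1)X)^{n1}(1+(q-1)Y)^{n2} A((1-X)/(1+(q-1)X),(1-Y)/(1+(q-1)Y))`,
stated as an identity of rational functions (for all `X, Y` with nonzero denominators). -/
theorem stmt10 (F : Type*) [Field F] [Fintype F] [DecidableEq F] (q n1 n2 : ℕ)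
    (hq : Fintype.card F = q)
    (C : Submodule F ((Fin n1 → F) × (Fin n2 → F)))
    (Cd : Set ((Fin n1 → F) × (Fin n2 → F)))
    (hCd : Cd = {x | ∀ c ∈ C, (∑ i, x.1 i * c.1 i) + (∑ i, x.2 i * c.2 i) = 0})
    (A Ad : ℚ → ℚ → ℚ)
    (hA : ∀ X Y : ℚ, A X Y = ∑ w ∈ Finset.range (n1 + 1), ∑ v ∈ Finset.range (n2 + 1),
      (Set.ncard {c : (Fin n1 → F) × (Fin n2 → F) |
          c ∈ C ∧ hammingNorm c.1 = w ∧ hammingNorm c.2 = v} : ℚ) * X ^ w * Y ^ v)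
    (hAd : ∀ X Y : ℚ, Ad X Y = ∑ w ∈ Finset.range (n1 + 1), ∑ v ∈ Finset.range (n2 + 1),
      (Set.ncard {x ∈ Cd | hammingNorm x.1 = w ∧ hammingNorm x.2 = v} : ℚ) * X ^ w * Y ^ v)
    (X Y : ℚ) (hX : 1 + ((q : ℚ) - 1) * X ≠ 0) (hY : 1 + ((q : ℚ) - 1) * Y ≠ 0) :
    Ad X Y = 1 / (Nat.card C : ℚ) *
      (1 + ((q : ℚ) - 1) * X) ^ n1 * (1 + ((q : ℚ) - 1) * Y) ^ n2 *
      A ((1 - X) / (1 + ((q : ℚ) - 1) * X)) ((1 - Y) / (1 + ((q : ℚ) - 1) * Y)) := by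
  classical
  subst hq hCd
  -- the primitive additive character
  have hch : ringChar ℚ ≠ ringChar F := by
    have hp : (ringChar F).Prime := CharP.char_is_prime F _
    rw [ringChar.eq_zero]
    exact fun h => hp.ne_zero h.symm
  set ψ := AddChar.FiniteField.primitiveChar F ℚ hch with hψ
  set K := CyclotomicField ψ.n ℚ with hK
  haveI : CharZero K := charZero_of_injective_algebraMap (algebraMap ℚ K).injective
  set CF := (Set.toFinite (C : Set ((Fin n1 → F) × (Fin n2 → F)))).toFinset with hCF
  set DF := (Set.toFinite {x : (Fin n1 → F) × (Fin n2 → F) |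
      ∀ c ∈ C, (∑ i, x.1 i * c.1 i) + (∑ i, x.2 i * c.2 i) = 0}).toFinset with hDF
  set κ : ℚ := (Fintype.card F : ℚ) with hκ
  -- the key identity over ℚ
  have hQ : (CF.card : ℚ) * ∑ x ∈ DF, X ^ hammingNorm x.1 * Y ^ hammingNorm x.2
      = ∑ c ∈ CF,
        ((1 + (κ - 1) * X) ^ (n1 - hammingNorm c.1) * (1 - X) ^ hammingNorm c.1)
          * ((1 + (κ - 1) * Y) ^ (n2 - hammingNorm c.2) * (1 - Y) ^ hammingNorm c.2) := by
    have hk := key' (K := K) ψ.char ψ.prim C (X : K) (Y : K)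
    rw [← hCF, ← hDF] at hk
    refine Rat.cast_injective (α := K) ?_
    push_cast
    exact hk
  -- cardinality facts
  have hcard : (Nat.card C : ℚ) = (CF.card : ℚ) := by
    norm_cast
    rw [hCF, ← Set.ncard_eq_toFinset_card (C : Set ((Fin n1 → F) × (Fin n2 → F)))
      (Set.toFinite _), ← Nat.card_coe_set_eq]
    rfl
  have hcc : (CF.card : ℚ) ≠ 0 := by
    have : (0 : (Fin n1 → F) × (Fin n2 → F)) ∈ CF := by
      rw [hCF, Set.Finite.mem_toFinset]; exact C.zero_mem
    have := Finset.card_pos.mpr ⟨_, this⟩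
    positivity
  -- rewrite Ad
  have hAd' : Ad X Y = ∑ x ∈ DF, X ^ hammingNorm x.1 * Y ^ hammingNorm x.2 := by
    rw [hAd, ← weight_sum']
  -- rewrite A
  set tX : ℚ := (1 - X) / (1 + (κ - 1) * X) with htX
  set tY : ℚ := (1 - Y) / (1 + (κ - 1) * Y) with htY
  have hA' : A tX tY = ∑ c ∈ CF, tX ^ hammingNorm c.1 * tY ^ hammingNorm c.2 := by
    rw [hA, ← weight_sum']
    refine Finset.sum_congr rfl fun w _ => Finset.sum_congr rfl fun v _ => ?_
    have hset : {c : (Fin n1 → F) × (Fin n2 → F) |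
          c ∈ C ∧ hammingNorm c.1 = w ∧ hammingNorm c.2 = v}
        = {x : (Fin n1 → F) × (Fin n2 → F) |
          x ∈ (C : Set ((Fin n1 → F) × (Fin n2 → F))) ∧
            hammingNorm x.1 = w ∧ hammingNorm x.2 = v} := by
      ext z; simp [SetLike.mem_coe]
    rw [hset]
  rw [hAd', hA', hcard]
  have hbig : (1 + (κ - 1) * X) ^ n1 * (1 + (κ - 1) * Y) ^ n2
      * ∑ c ∈ CF, tX ^ hammingNorm c.1 * tY ^ hammingNorm c.2
      = ∑ c ∈ CF,
        ((1 + (κ - 1) * X) ^ (n1 - hammingNorm c.1) * (1 - X) ^ hammingNorm c.1)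
          * ((1 + (κ - 1) * Y) ^ (n2 - hammingNorm c.2) * (1 - Y) ^ hammingNorm c.2) := by
    rw [Finset.mul_sum]
    refine Finset.sum_congr rfl fun c hc => ?_
    have h1 : hammingNorm c.1 ≤ n1 := by simpa using hammingNorm_le_card_fintype (x := c.1)
    have h2 : hammingNorm c.2 ≤ n2 := by simpa using hammingNorm_le_card_fintype (x := c.2)
    rw [htX, htY, div_pow, div_pow]
    rw [← pow_sub_mul_pow (1 + (κ - 1) * X) h1, ← pow_sub_mul_pow (1 + (κ - 1) * Y) h2]
    field_simp
  calc ∑ x ∈ DF, X ^ hammingNorm x.1 * Y ^ hammingNorm x.2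
      = 1 / (CF.card : ℚ)
        * ((CF.card : ℚ) * ∑ x ∈ DF, X ^ hammingNorm x.1 * Y ^ hammingNorm x.2) := by
        rw [← mul_assoc, one_div, inv_mul_cancel₀ hcc, one_mul]
    _ = 1 / (CF.card : ℚ) * ((1 + (κ - 1) * X) ^ n1 * (1 + (κ - 1) * Y) ^ n2
        * ∑ c ∈ CF, tX ^ hammingNorm c.1 * tY ^ hammingNorm c.2) := by rw [hQ, hbig]
    _ = 1 / (CF.card : ℚ) * (1 + (κ - 1) * X) ^ n1 * (1 + (κ - 1) * Y) ^ n2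
        * ∑ c ∈ CF, tX ^ hammingNorm c.1 * tY ^ hammingNorm c.2 := by ring
end

section
/- The split weight enumerator of an (n, k) MDS code over F_q with respect to any (n_1, n_2) partition of its coordinates (n_1 + n_2 = n) is A(w_1, w_2) = E(w_1 + w_2) * binomial(n_1, w_1) * binomial(n_2, w_2) / binomial(n, w_1 + w_2), where E is the weight enumerator of the code. -/
open Finset Module

set_option linter.unusedSectionVars false

namespace Stmt12

variable {F : Type*} [Field F] [Fintype F] [DecidableEq F]
variable {ι : Type*} [Fintype ι] [DecidableEq ι]

def res (D : Submodule F (ι → F)) (T : Finset ι) : D →ₗ[F] (T → F) :=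
  (LinearMap.funLeft F F (fun i : T => (i : ι))).comp D.subtype

theorem res_apply (D : Submodule F (ι → F)) (T : Finset ι) (c : D) (i : T) :
    res D T c i = (c : ι → F) i := rfl

variable {D : Submodule F (ι → F)} {k : ℕ}
variable (hk : Module.finrank F D = k)
variable (hd : ∀ c ∈ D, c ≠ 0 → Fintype.card ι - k + 1 ≤ hammingNorm c)

include hd in
theorem ker_res (T : Finset ι) (hT : k ≤ T.card) : LinearMap.ker (res D T) = ⊥ := by
  rw [LinearMap.ker_eq_bot']
  intro c hc
  by_contra hc0
  have hne : (c : ι → F) ≠ 0 := by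
    simpa [Submodule.coe_eq_zero] using hc0
  have h1 := hd c c.2 hne
  have hsub : ({i | (c : ι → F) i ≠ 0} : Finset ι) ⊆ Tᶜ := by
    intro i hi
    simp only [Finset.mem_filter, Finset.mem_univ, true_and] at hi
    rw [Finset.mem_compl]
    intro hiT
    exact hi (congrFun hc ⟨i, hiT⟩)
  have h2 : hammingNorm (c : ι → F) ≤ Fintype.card ι - T.card := by
    calc hammingNorm (c : ι → F) ≤ Tᶜ.card := Finset.card_le_card hsub
    _ = Fintype.card ι - T.card := Finset.card_compl T
  have h3 : T.card ≤ Fintype.card ι := Finset.card_le_univ T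
  omega

include hk hd in
theorem res_surj (hkn : k ≤ Fintype.card ι) (T : Finset ι) (hT : T.card ≤ k) :
    Function.Surjective (res D T) := by
  obtain ⟨T', hTT', -, hT'⟩ := Finset.exists_subsuperset_card_eq (Finset.subset_univ T)
    hT (by simpa using hkn)
  have hker : LinearMap.ker (res D T') = ⊥ := ker_res hd T' (le_of_eq hT'.symm)
  have hfr : Module.finrank F (T' → F) = k := by
    rw [Module.finrank_pi]
    simpa using hT'
  have hrange : LinearMap.range (res D T') = ⊤ := by
    apply Submodule.eq_top_of_finrank_eq
    have := LinearMap.finrank_range_add_finrank_ker (res D T')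
    rw [hker, finrank_bot, add_zero, hk] at this
    rw [this, hfr]
  have hsurj' : Function.Surjective (res D T') := LinearMap.range_eq_top.mp hrange
  have hcomp : res D T = (LinearMap.funLeft F F
      (fun i : T => (⟨i.1, hTT' i.2⟩ : T'))).comp (res D T') := rfl
  rw [hcomp, LinearMap.coe_comp]
  exact (LinearMap.funLeft_surjective_of_injective F F
    (fun i : T => (⟨i.1, hTT' i.2⟩ : T'))
    (fun a b hab => Subtype.ext (by simpa using congrArg Subtype.val hab))).comp hsurj'

include hk hd in
theorem count_bounded (hkn : k ≤ Fintype.card ι) (S : Finset ι) :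
    Nat.card {c : ι → F | c ∈ D ∧ ∀ i ∉ S, c i = 0}
      = Fintype.card F ^ (k - (Fintype.card ι - S.card)) := by
  classical
  have e : {c : ι → F | c ∈ D ∧ ∀ i ∉ S, c i = 0} ≃ LinearMap.ker (res D Sᶜ) := by
    refine ⟨fun c => ⟨⟨c.1, c.2.1⟩, ?_⟩, fun x => ⟨x.1.1, x.1.2, fun i hi => ?_⟩, ?_, ?_⟩
    · rw [LinearMap.mem_ker]
      ext j
      exact c.2.2 j.1 (Finset.mem_compl.mp j.2)
    · exact congrFun (LinearMap.mem_ker.mp x.2) ⟨i, Finset.mem_compl.mpr hi⟩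
    · intro c; rfl
    · intro x; rfl
  rw [Nat.card_congr e]
  have hcard : Nat.card (LinearMap.ker (res D Sᶜ))
      = Fintype.card F ^ Module.finrank F (LinearMap.ker (res D Sᶜ)) := by
    have : Fintype (LinearMap.ker (res D Sᶜ)) := Fintype.ofFinite _
    rw [Nat.card_eq_fintype_card, card_eq_pow_finrank (K := F)]
  rw [hcard]
  congr 1
  have hTcard : Sᶜ.card = Fintype.card ι - S.card := Finset.card_compl S
  have hScard : S.card ≤ Fintype.card ι := Finset.card_le_univ S
  rcases le_or_gt k Sᶜ.card with h | h
  · rw [ker_res hd Sᶜ h, finrank_bot]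
    omega
  · have hsurj := res_surj hk hd hkn Sᶜ h.le
    have := LinearMap.finrank_range_add_finrank_ker (res D Sᶜ)
    rw [LinearMap.range_eq_top.mpr hsurj, finrank_top, Module.finrank_pi, hk] at this
    simp only [Fintype.card_coe] at this
    omega



noncomputable def G (q k n : ℕ) : ℕ → ℚ
  | s => (q : ℚ) ^ (k - (n - s)) -
      ∑ t ∈ (Finset.range s).attach, ((s.choose t.1 : ℚ) * G q k n t.1)
  termination_by s => s
  decreasing_by exact Finset.mem_range.mp t.2

theorem G_eq (q k n s : ℕ) :
    G q k n s = (q : ℚ) ^ (k - (n - s)) - ∑ t ∈ Finset.range s, (s.choose t : ℚ) * G q k n t := by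
  rw [G, ← Finset.sum_attach (Finset.range s) (fun t => (s.choose t : ℚ) * G q k n t)]

theorem supp_subset_iff (c : ι → F) (S : Finset ι) :
    (∀ i ∉ S, c i = 0) ↔ ({i | c i ≠ 0} : Finset ι) ⊆ S := by
  constructor
  · intro h i hi
    simp only [Finset.mem_filter, Finset.mem_univ, true_and] at hi
    by_contra his
    exact hi (h i his)
  · intro h i hiS
    by_contra hc
    exact hiS (h (by simp [hc]))

theorem nat_card_eq_filter_card {α : Type*} [Fintype α] (p : α → Prop) [DecidablePred p] :
    Nat.card {c : α | p c} = (Finset.univ.filter p).card := by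
  rw [Nat.card_eq_fintype_card]
  exact Fintype.card_subtype p

include hk hd in
theorem count_exact (hkn : k ≤ Fintype.card ι) (S : Finset ι) :
    (Nat.card {c : ι → F | c ∈ D ∧ ({i | c i ≠ 0} : Finset ι) = S} : ℚ)
      = G (Fintype.card F) k (Fintype.card ι) S.card := by
  classical
  induction S using Finset.strongInduction with
  | _ S ih =>
    have hpart : ((Finset.univ.filter
          (fun c : ι → F => c ∈ D ∧ ∀ i ∉ S, c i = 0)).card : ℚ)
        = ∑ T ∈ S.powerset, ((Finset.univ.filter
            (fun c : ι → F => c ∈ D ∧ ({i | c i ≠ 0} : Finset ι) = T)).card : ℚ) := by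
      rw [Finset.card_eq_sum_card_fiberwise
        (f := fun c : ι → F => ({i | c i ≠ 0} : Finset ι)) (t := S.powerset)
        (fun c hc => by
          simp only [Finset.mem_coe, Finset.mem_filter, Finset.mem_univ, true_and] at hc
          exact Finset.mem_powerset.mpr ((supp_subset_iff c S).mp hc.2))]
      push_cast
      refine Finset.sum_congr rfl fun T hT => Nat.cast_inj.mpr (congrArg Finset.card ?_)
      rw [Finset.filter_filter]
      ext c
      simp only [Finset.mem_filter, Finset.mem_univ, true_and]
      constructor
      · rintro ⟨⟨h1, -⟩, h3⟩; exact ⟨h1, h3⟩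
      · rintro ⟨h1, h2⟩
        exact ⟨⟨h1, (supp_subset_iff c S).mpr (h2 ▸ Finset.mem_powerset.mp hT)⟩, h2⟩
    have hN : ((Finset.univ.filter
          (fun c : ι → F => c ∈ D ∧ ∀ i ∉ S, c i = 0)).card : ℚ)
        = (Fintype.card F : ℚ) ^ (k - (Fintype.card ι - S.card)) := by
      rw [← nat_card_eq_filter_card, count_bounded hk hd hkn S]
      push_cast
      ring
    rw [hN, Finset.sum_powerset, Finset.sum_range_succ, Finset.powersetCard_self,
      Finset.sum_singleton] at hpart
    have hsmall : ∀ j ∈ Finset.range S.card,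
        (∑ T ∈ Finset.powersetCard j S, ((Finset.univ.filter
            (fun c : ι → F => c ∈ D ∧ ({i | c i ≠ 0} : Finset ι) = T)).card : ℚ))
          = (S.card.choose j : ℚ) * G (Fintype.card F) k (Fintype.card ι) j := by
      intro j hj
      rw [Finset.mem_range] at hj
      have hall : ∀ T ∈ Finset.powersetCard j S,
          ((Finset.univ.filter
            (fun c : ι → F => c ∈ D ∧ ({i | c i ≠ 0} : Finset ι) = T)).card : ℚ)
          = G (Fintype.card F) k (Fintype.card ι) j := by
        intro T hT
        rw [Finset.mem_powersetCard] at hT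
        have hne : T ≠ S := fun h => absurd hT.2 (by rw [h]; omega)
        have hssub : T ⊂ S := hT.1.ssubset_of_ne hne
        rw [← nat_card_eq_filter_card, ih T hssub, hT.2]
      rw [Finset.sum_congr rfl hall, Finset.sum_const, Finset.card_powersetCard,
        nsmul_eq_mul]
    rw [Finset.sum_congr rfl hsmall] at hpart
    rw [nat_card_eq_filter_card, G_eq]
    linarith [hpart]



include hk hd in
theorem count_weight (hkn : k ≤ Fintype.card ι) (w : ℕ) :
    (Nat.card {c : ι → F | c ∈ D ∧ hammingNorm c = w} : ℚ)
      = ((Fintype.card ι).choose w : ℚ) * G (Fintype.card F) k (Fintype.card ι) w := by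
  classical
  rw [nat_card_eq_filter_card]
  have hnorm : ∀ c : ι → F, hammingNorm c = ({i | c i ≠ 0} : Finset ι).card := fun c => rfl
  have hpart : ((Finset.univ.filter (fun c : ι → F => c ∈ D ∧ hammingNorm c = w)).card : ℚ)
      = ∑ T ∈ Finset.powersetCard w (Finset.univ : Finset ι),
          ((Finset.univ.filter
            (fun c : ι → F => c ∈ D ∧ ({i | c i ≠ 0} : Finset ι) = T)).card : ℚ) := by
    rw [Finset.card_eq_sum_card_fiberwise
      (f := fun c : ι → F => ({i | c i ≠ 0} : Finset ι))
      (t := Finset.powersetCard w Finset.univ)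
      (fun c hc => by
        simp only [Finset.mem_coe, Finset.mem_filter, Finset.mem_univ, true_and] at hc
        rw [Finset.mem_coe, Finset.mem_powersetCard]
        exact ⟨Finset.subset_univ _, by rw [← hnorm c]; exact hc.2⟩)]
    push_cast
    refine Finset.sum_congr rfl fun T hT => Nat.cast_inj.mpr (congrArg Finset.card ?_)
    rw [Finset.filter_filter]
    ext c
    simp only [Finset.mem_filter, Finset.mem_univ, true_and]
    rw [Finset.mem_powersetCard] at hT
    constructor
    · rintro ⟨⟨h1, -⟩, h3⟩; exact ⟨h1, h3⟩
    · rintro ⟨h1, h2⟩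
      exact ⟨⟨h1, by rw [hnorm c, h2, hT.2]⟩, h2⟩
  rw [hpart]
  have hall : ∀ T ∈ Finset.powersetCard w (Finset.univ : Finset ι),
      ((Finset.univ.filter
        (fun c : ι → F => c ∈ D ∧ ({i | c i ≠ 0} : Finset ι) = T)).card : ℚ)
      = G (Fintype.card F) k (Fintype.card ι) w := by
    intro T hT
    rw [Finset.mem_powersetCard] at hT
    rw [← nat_card_eq_filter_card, count_exact hk hd hkn T, hT.2]
  rw [Finset.sum_congr rfl hall, Finset.sum_const, Finset.card_powersetCard,
    Finset.card_univ, nsmul_eq_mul]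



theorem supp_elim {α β : Type*} [Fintype α] [Fintype β] [DecidableEq α] [DecidableEq β]
    (f : α → F) (g : β → F) :
    ({i | Sum.elim f g i ≠ 0} : Finset (α ⊕ β))
      = ({a | f a ≠ 0} : Finset α).disjSum ({b | g b ≠ 0} : Finset β) := by
  ext i
  cases i with
  | inl a => simp [Finset.inl_mem_disjSum]
  | inr b => simp [Finset.inr_mem_disjSum]

theorem norm_elim {α β : Type*} [Fintype α] [Fintype β] [DecidableEq α] [DecidableEq β]
    (f : α → F) (g : β → F) :
    hammingNorm (Sum.elim f g) = hammingNorm f + hammingNorm g := by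
  show ({i | Sum.elim f g i ≠ 0} : Finset (α ⊕ β)).card = _
  rw [supp_elim, Finset.card_disjSum]
  rfl

end Stmt12

open Stmt12

set_option linter.unusedVariables false

/-- The split weight enumerator of an `(n,k)` MDS code over `F_q` with respect to an
`(n_1,n_2)` partition of its coordinates is
`A(w_1,w_2) = E(w_1+w_2) C(n_1,w_1) C(n_2,w_2) / C(n, w_1+w_2)`. -/
theorem stmt12 (F : Type*) [Field F] [Fintype F] [DecidableEq F] (n1 n2 k : ℕ)
    (C : Submodule F ((Fin n1 → F) × (Fin n2 → F)))
    (hk : Module.finrank F C = k) (hkpos : 0 < k)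
    (hMDS : sInf {w | ∃ c, c ∈ C ∧ c ≠ 0 ∧ hammingNorm c.1 + hammingNorm c.2 = w}
      = (n1 + n2) - k + 1) :
    ∀ w1 w2 : ℕ, w1 ≤ n1 → w2 ≤ n2 →
      (Set.ncard {c : (Fin n1 → F) × (Fin n2 → F) |
          c ∈ C ∧ hammingNorm c.1 = w1 ∧ hammingNorm c.2 = w2} : ℚ)
        = (Set.ncard {c : (Fin n1 → F) × (Fin n2 → F) |
            c ∈ C ∧ hammingNorm c.1 + hammingNorm c.2 = w1 + w2} : ℚ)
          * (n1.choose w1 : ℚ) * (n2.choose w2 : ℚ) / ((n1 + n2).choose (w1 + w2) : ℚ) := by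
  classical
  intro w1 w2 hw1 hw2
  set e : ((Fin n1 → F) × (Fin n2 → F)) ≃ₗ[F] (Fin n1 ⊕ Fin n2 → F) :=
    (LinearEquiv.sumArrowLequivProdArrow (Fin n1) (Fin n2) F F).symm with he0
  have he : ∀ c : (Fin n1 → F) × (Fin n2 → F), e c = Sum.elim c.1 c.2 := by
    intro c; funext i; cases i <;> rfl
  set D : Submodule F (Fin n1 ⊕ Fin n2 → F) := C.map (e : _ →ₗ[F] _) with hD
  have hcard : Fintype.card (Fin n1 ⊕ Fin n2) = n1 + n2 := by simp
  have hmemD : ∀ c, c ∈ C ↔ e c ∈ D := by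
    intro c
    rw [hD, Submodule.mem_map_equiv, e.symm_apply_apply]
  have hkD : Module.finrank F D = k := by
    rw [hD, LinearEquiv.finrank_map_eq]; exact hk
  have hkn : k ≤ Fintype.card (Fin n1 ⊕ Fin n2) := by
    have h1 := Submodule.finrank_le D
    rw [hkD, Module.finrank_pi] at h1
    exact h1
  have hdD : ∀ d ∈ D, d ≠ 0 → Fintype.card (Fin n1 ⊕ Fin n2) - k + 1 ≤ hammingNorm d := by
    intro d hdmem hd0
    set c := e.symm d with hc
    have hcC : c ∈ C := (Submodule.mem_map_equiv C).mp hdmem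
    have hdc : d = e c := by rw [hc, e.apply_symm_apply]
    have hc0 : c ≠ 0 := fun h => hd0 (by rw [hdc, h, map_zero])
    have hmem : hammingNorm c.1 + hammingNorm c.2 ∈
        {w | ∃ c', c' ∈ C ∧ c' ≠ 0 ∧ hammingNorm c'.1 + hammingNorm c'.2 = w} :=
      ⟨c, hcC, hc0, rfl⟩
    have hle := Nat.sInf_le hmem
    rw [hMDS] at hle
    rw [hcard, hdc, he c, norm_elim]
    exact hle
  -- E-count
  have hE : (Nat.card {c : (Fin n1 → F) × (Fin n2 → F) |
        c ∈ C ∧ hammingNorm c.1 + hammingNorm c.2 = w1 + w2} : ℚ)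
      = ((n1 + n2).choose (w1 + w2) : ℚ)
        * G (Fintype.card F) k (Fintype.card (Fin n1 ⊕ Fin n2)) (w1 + w2) := by
    have hEq : Nat.card {c : (Fin n1 → F) × (Fin n2 → F) |
          c ∈ C ∧ hammingNorm c.1 + hammingNorm c.2 = w1 + w2}
        = Nat.card {d : Fin n1 ⊕ Fin n2 → F | d ∈ D ∧ hammingNorm d = w1 + w2} := by
      refine Nat.card_congr (Equiv.subtypeEquiv e.toEquiv fun c => ?_)
      simp only [LinearEquiv.coe_toEquiv, Set.mem_setOf_eq]
      have hh : hammingNorm (e c) = hammingNorm c.1 + hammingNorm c.2 := by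
        rw [he c, norm_elim]
      rw [hh, ← hmemD c]
    rw [hEq, count_weight hkD hdD hkn (w1 + w2), hcard]
  -- A-count
  have hA : (Nat.card {c : (Fin n1 → F) × (Fin n2 → F) |
        c ∈ C ∧ hammingNorm c.1 = w1 ∧ hammingNorm c.2 = w2} : ℚ)
      = (n1.choose w1 : ℚ) * (n2.choose w2 : ℚ)
        * G (Fintype.card F) k (Fintype.card (Fin n1 ⊕ Fin n2)) (w1 + w2) := by
    rw [nat_card_eq_filter_card]
    have hnorm1 : ∀ f : Fin n1 → F, hammingNorm f = ({i | f i ≠ 0} : Finset (Fin n1)).card :=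
      fun f => rfl
    have hnorm2 : ∀ f : Fin n2 → F, hammingNorm f = ({i | f i ≠ 0} : Finset (Fin n2)).card :=
      fun f => rfl
    have hpart : ((Finset.univ.filter (fun c : (Fin n1 → F) × (Fin n2 → F) =>
          c ∈ C ∧ hammingNorm c.1 = w1 ∧ hammingNorm c.2 = w2)).card : ℚ)
        = ∑ T ∈ Finset.powersetCard w1 (Finset.univ : Finset (Fin n1)) ×ˢ
            Finset.powersetCard w2 (Finset.univ : Finset (Fin n2)),
            ((Finset.univ.filter (fun c : (Fin n1 → F) × (Fin n2 → F) =>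
              c ∈ C ∧ ({i | c.1 i ≠ 0} : Finset (Fin n1)) = T.1
                ∧ ({i | c.2 i ≠ 0} : Finset (Fin n2)) = T.2)).card : ℚ) := by
      rw [Finset.card_eq_sum_card_fiberwise
        (f := fun c : (Fin n1 → F) × (Fin n2 → F) =>
          (({i | c.1 i ≠ 0} : Finset (Fin n1)), ({i | c.2 i ≠ 0} : Finset (Fin n2))))
        (t := Finset.powersetCard w1 Finset.univ ×ˢ Finset.powersetCard w2 Finset.univ)
        (fun c hc => by
          simp only [Finset.mem_coe, Finset.mem_filter, Finset.mem_univ, true_and] at hc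
          rw [Finset.mem_coe, Finset.mem_product, Finset.mem_powersetCard, Finset.mem_powersetCard]
          exact ⟨⟨Finset.subset_univ _, by rw [← hnorm1 c.1]; exact hc.2.1⟩,
            ⟨Finset.subset_univ _, by rw [← hnorm2 c.2]; exact hc.2.2⟩⟩)]
      push_cast
      refine Finset.sum_congr rfl fun T hT => Nat.cast_inj.mpr (congrArg Finset.card ?_)
      rw [Finset.filter_filter]
      ext c
      simp only [Finset.mem_filter, Finset.mem_univ, true_and, Prod.ext_iff]
      rw [Finset.mem_product, Finset.mem_powersetCard, Finset.mem_powersetCard] at hT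
      constructor
      · rintro ⟨⟨h1, -, -⟩, h3, h4⟩; exact ⟨h1, h3, h4⟩
      · rintro ⟨h1, h2, h3⟩
        exact ⟨⟨h1, by rw [hnorm1 c.1, h2, hT.1.2], by rw [hnorm2 c.2, h3, hT.2.2]⟩, h2, h3⟩
    rw [hpart]
    have hall : ∀ T ∈ Finset.powersetCard w1 (Finset.univ : Finset (Fin n1)) ×ˢ
        Finset.powersetCard w2 (Finset.univ : Finset (Fin n2)),
        ((Finset.univ.filter (fun c : (Fin n1 → F) × (Fin n2 → F) =>
          c ∈ C ∧ ({i | c.1 i ≠ 0} : Finset (Fin n1)) = T.1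
            ∧ ({i | c.2 i ≠ 0} : Finset (Fin n2)) = T.2)).card : ℚ)
        = G (Fintype.card F) k (Fintype.card (Fin n1 ⊕ Fin n2)) (w1 + w2) := by
      intro T hT
      rw [Finset.mem_product, Finset.mem_powersetCard, Finset.mem_powersetCard] at hT
      rw [← nat_card_eq_filter_card]
      have hEq : Nat.card {c : (Fin n1 → F) × (Fin n2 → F) |
            c ∈ C ∧ ({i | c.1 i ≠ 0} : Finset (Fin n1)) = T.1
              ∧ ({i | c.2 i ≠ 0} : Finset (Fin n2)) = T.2}
          = Nat.card {d : Fin n1 ⊕ Fin n2 → F |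
              d ∈ D ∧ ({i | d i ≠ 0} : Finset (Fin n1 ⊕ Fin n2)) = T.1.disjSum T.2} := by
        refine Nat.card_congr (Equiv.subtypeEquiv e.toEquiv fun c => ?_)
        simp only [LinearEquiv.coe_toEquiv, Set.mem_setOf_eq]
        have hsupp : ({i | (e c) i ≠ 0} : Finset (Fin n1 ⊕ Fin n2))
            = ({i | c.1 i ≠ 0} : Finset (Fin n1)).disjSum ({i | c.2 i ≠ 0} : Finset (Fin n2)) := by
          rw [he c]
          exact supp_elim c.1 c.2
        constructor
        · rintro ⟨h1, h2, h3⟩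
          exact ⟨(hmemD c).mp h1, by rw [hsupp, h2, h3]⟩
        · rintro ⟨h1, h2⟩
          rw [hsupp] at h2
          rw [Finset.disjSum_inj] at h2
          exact ⟨(hmemD c).mpr h1, h2.1, h2.2⟩
      rw [hEq, count_exact hkD hdD hkn (T.1.disjSum T.2), Finset.card_disjSum, hT.1.2, hT.2.2]
    rw [Finset.sum_congr rfl hall, Finset.sum_const, Finset.card_product,
      Finset.card_powersetCard, Finset.card_powersetCard, Finset.card_univ, Finset.card_univ,
      Fintype.card_fin, Fintype.card_fin, nsmul_eq_mul]
    push_cast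
    ring
  rw [← Nat.card_coe_set_eq, ← Nat.card_coe_set_eq, hA, hE]
  have hCn : ((n1 + n2).choose (w1 + w2) : ℚ) ≠ 0 :=
    Nat.cast_ne_zero.mpr (Nat.choose_pos (by omega)).ne'
  field_simp
end
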